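/- arXiv:1412.5193 — 5 statements merged into one kernel-verified Lean document; each statement's English description precedes it below -/
import Mathlib

section
/- Let A be a skew PBW extension of a ring R with respect to x₁,…,xₙ. Then for every 1 ≤ i ≤ n there exist an injective ring endomorphism σᵢ : R → R and a σᵢ-derivation δᵢ : R → R (i.e., δᵢ is additive and δᵢ(rs) = σᵢ(r)δᵢ(s) + δᵢ(r)s for all r,s ∈ R) such that xᵢ r = σᵢ(r) xᵢ + δᵢ(r) for every r ∈ R. -/
/-- The standard monomial `x₁^{α₁} ⋯ xₙ^{αₙ}`, the factors taken in increasing index order. -/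
def xmon {A : Type} [Ring A] {n : ℕ} (x : Fin n → A) (α : Fin n → ℕ) : A :=
  ((List.finRange n).map (fun i => x i ^ α i)).prod

/-- `A` is a skew PBW extension of the subring `S ⊆ A` with respect to `x₁,…,xₙ`. -/
structure IsSkewPBWExt {A : Type} [Ring A] {n : ℕ} (S : Subring A) (x : Fin n → A) : Prop where
  /-- The standard monomials are left linearly independent over `S`. -/
  linearIndependent : LinearIndependent S (xmon x)
  /-- The standard monomials span `A` as a left `S`-module. -/
  spans : Submodule.span S (Set.range (xmon x)) = ⊤
  /-- For every `i` and `0 ≠ r ∈ S` there is `0 ≠ c ∈ S` with `xᵢ r − c xᵢ ∈ S`. -/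
  comm_coeff : ∀ (i : Fin n) (r : A), r ∈ S → r ≠ 0 →
    ∃ c ∈ S, c ≠ 0 ∧ x i * r - c * x i ∈ S
  /-- For all `i, j` there is `0 ≠ c ∈ S` with `x_j xᵢ − c xᵢ x_j ∈ S + Sx₁ + ⋯ + Sxₙ`. -/
  comm_vars : ∀ i j : Fin n, ∃ c ∈ S, c ≠ 0 ∧
    x j * x i - c * (x i * x j) ∈ Submodule.span S (insert (1 : A) (Set.range x))

lemma list_prod_single' {A : Type} [Monoid A] {ι : Type} (f : ι → A) (i : ι) :
    ∀ l : List ι, l.Nodup → i ∈ l → (∀ j, j ≠ i → f j = 1) → (l.map f).prod = f i := by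
  intro l
  induction l with
  | nil => simp
  | cons a t ih =>
    intro hnd hmem h1
    simp only [List.map_cons, List.prod_cons]
    rcases List.mem_cons.mp hmem with rfl | hmt
    · have ht : (t.map f).prod = 1 := List.prod_eq_one (by
        intro y hy
        obtain ⟨j, hj, rfl⟩ := List.mem_map.mp hy
        exact h1 j (by rintro rfl; exact (List.nodup_cons.mp hnd).1 hj))
      simp [ht]
    · rw [h1 a (by rintro rfl; exact (List.nodup_cons.mp hnd).1 hmt), one_mul,
        ih (List.nodup_cons.mp hnd).2 hmt h1]

lemma xmon_single {A : Type} [Ring A] {n : ℕ} (x : Fin n → A) (i : Fin n) :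
    xmon x (Pi.single i 1) = x i := by
  have := list_prod_single' (fun j => x j ^ (Pi.single i 1 : Fin n → ℕ) j) i
    (List.finRange n) (List.nodup_finRange n) (List.mem_finRange i)
    (by intro j hj; simp [Pi.single_eq_of_ne hj])
  simpa [xmon] using this

lemma xmon_zero {A : Type} [Ring A] {n : ℕ} (x : Fin n → A) :
    xmon x 0 = 1 := by
  apply List.prod_eq_one
  intro y hy
  obtain ⟨j, _, rfl⟩ := List.mem_map.mp hy
  simp

/-- For every `1 ≤ i ≤ n` there exist an injective ring endomorphism `σᵢ : R → R` and a
`σᵢ`-derivation `δᵢ : R → R` such that `xᵢ r = σᵢ(r) xᵢ + δᵢ(r)` for every `r ∈ R`. -/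
theorem skewPBW_induced_endomorphisms {A : Type} [Ring A] {n : ℕ}
    (S : Subring A) (x : Fin n → A) (hA : IsSkewPBWExt S x) (i : Fin n) :
    ∃ σ : S →+* S, Function.Injective σ ∧ ∃ δ : S → S,
      (∀ r s : S, δ (r + s) = δ r + δ s) ∧
      (∀ r s : S, δ (r * s) = σ r * δ s + δ r * s) ∧
      (∀ r : S, x i * (r : A) = (σ r : A) * x i + (δ r : A)) := by
  classical
  -- key: coefficients of `x i` and `1` are uniquely determined
  have key : ∀ c d : S, (c : A) * x i + (d : A) = 0 → c = 0 ∧ d = 0 := by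
    intro c d h
    have hg : Function.Injective (fun b : Bool => if b then (Pi.single i 1 : Fin n → ℕ) else 0) := by
      intro a b hab
      cases a <;> cases b <;> simp_all
      · exact absurd (congrFun hab.symm i) (by simp)
    have li := hA.linearIndependent.comp _ hg
    have := Fintype.linearIndependent_iff.mp li (fun b => if b then c else d) ?_
    · exact ⟨this true, this false⟩
    · rw [Fintype.sum_bool]
      show (c : A) * xmon x (Pi.single i 1) + (d : A) * xmon x 0 = 0
      rw [xmon_single, xmon_zero, mul_one]; exact h
  have uniq : ∀ c d c' d' : S, (c : A) * x i + (d : A) = (c' : A) * x i + (d' : A) →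
      c = c' ∧ d = d' := by
    intro c d c' d' h
    have h2 : ((c - c' : S) : A) * x i + ((d - d' : S) : A) = 0 := by
      push_cast
      rw [sub_mul, sub_add_sub_comm, h, sub_self]
    obtain ⟨h3, h4⟩ := key _ _ h2
    exact ⟨sub_eq_zero.mp (by exact_mod_cast h3), sub_eq_zero.mp (by exact_mod_cast h4)⟩
  have hex : ∀ r : S, ∃ p : S × S, x i * (r : A) = (p.1 : A) * x i + (p.2 : A) := by
    intro r
    by_cases hr : r = 0
    · exact ⟨(0, 0), by simp [hr]⟩
    · obtain ⟨c, hcS, hc0, hd⟩ := hA.comm_coeff i r r.2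
        (fun h => hr (Subtype.ext h))
      exact ⟨(⟨c, hcS⟩, ⟨x i * r - c * x i, hd⟩), by push_cast; abel⟩
  choose p hp using hex
  set σf : S → S := fun r => (p r).1 with hσf
  set δ : S → S := fun r => (p r).2 with hδ
  have heq : ∀ r : S, x i * (r : A) = ((σf r : A)) * x i + (δ r : A) := fun r => hp r
  have huniq : ∀ (r c d : S), x i * (r : A) = (c : A) * x i + (d : A) →
      σf r = c ∧ δ r = d := by
    intro r c d h
    exact uniq _ _ _ _ ((heq r).symm.trans h)
  have hone : σf 1 = 1 ∧ δ 1 = 0 := huniq 1 1 0 (by simp)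
  have hzero : σf 0 = 0 ∧ δ 0 = 0 := huniq 0 0 0 (by simp)
  have hadd : ∀ r s : S, σf (r + s) = σf r + σf s ∧ δ (r + s) = δ r + δ s := by
    intro r s
    apply huniq
    push_cast
    rw [mul_add, heq r, heq s, add_mul]
    abel
  have hmul : ∀ r s : S, σf (r * s) = σf r * σf s ∧ δ (r * s) = σf r * δ s + δ r * s := by
    intro r s
    apply huniq
    push_cast
    calc x i * ((r : A) * s) = (x i * r) * s := by rw [mul_assoc]
      _ = ((σf r : A) * x i + δ r) * s := by rw [heq r]
      _ = (σf r : A) * (x i * s) + (δ r : A) * s := by rw [add_mul, mul_assoc]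
      _ = (σf r : A) * ((σf s : A) * x i + δ s) + (δ r : A) * s := by rw [heq s]
      _ = (σf r : A) * (σf s : A) * x i + ((σf r : A) * δ s + (δ r : A) * s) := by
          rw [mul_add, ← mul_assoc]; abel
  refine ⟨⟨⟨⟨σf, hone.1⟩, fun r s => (hmul r s).1⟩, hzero.1, fun r s => (hadd r s).1⟩, ?_, δ,
    fun r s => (hadd r s).2, fun r s => (hmul r s).2, heq⟩
  -- injectivity
  intro r s hrs
  simp only [RingHom.coe_mk, MonoidHom.coe_mk, OneHom.coe_mk] at hrs
  by_contra hne
  have hrs0 : r - s ≠ 0 := sub_ne_zero.mpr hne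
  obtain ⟨c, hcS, hc0, hd⟩ := hA.comm_coeff i (r - s) (r - s).2
    (fun h => hrs0 (Subtype.ext h))
  have h1 : σf (r - s) = ⟨c, hcS⟩ :=
    (huniq (r - s) ⟨c, hcS⟩ ⟨_, hd⟩ (by push_cast; abel)).1
  have h2 : σf (r - s) = 0 := by
    have hsum := (hadd s (r - s)).1
    have hsr : s + (r - s) = r := by abel
    rw [hsr, hrs] at hsum
    exact left_eq_add.mp hsum
  exact hc0 (by simpa using congrArg Subtype.val (h1.symm.trans h2))
end

section
/- Let A be a skew PBW extension of a ring R with respect to x₁,…,xₙ. Then for every standard monomial x^α ∈ Mon(A) and every r ∈ R∖{0} there exist unique elements r_α ∈ R∖{0} and p_{α,r} ∈ A such that x^α r = r_α x^α + p_{α,r}, where p_{α,r} = 0 or deg(p_{α,r}) < |α| := α₁+⋯+αₙ; moreover r_α = σ^α(r) := σ₁^{α₁}(⋯σₙ^{αₙ}(r)⋯), where the σᵢ are the endomorphisms induced by A, and if r is left invertible in R then r_α is left invertible in R. -/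
/-- The `S`-span of the standard monomials of total degree `< N`.  An element `p ∈ A` satisfies
`p = 0` or `deg p < N` precisely when `p` lies in this submodule. -/
def lowMon {A : Type} [Ring A] {n : ℕ} (S : Subring A) (x : Fin n → A) (N : ℕ) :
    Submodule S A :=
  Submodule.span S (xmon x '' {α : Fin n → ℕ | (∑ i, α i) < N})

/-- `σ^α(r) := σ₁^{α₁}(σ₂^{α₂}(⋯ σₙ^{αₙ}(r) ⋯))`. -/
def sigmaPow {S : Type} {n : ℕ} (σ : Fin n → S → S) (α : Fin n → ℕ) : S → S :=
  (List.finRange n).foldr (fun i g => (σ i)^[α i] ∘ g) id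

section Aux

variable {A : Type} [Ring A] {n : ℕ} (S : Subring A) (x : Fin n → A)

lemma skew_smul_eq (s : S) (a : A) : s • a = (s : A) * a := rfl

lemma xmon_mem_lowMon {β : Fin n → ℕ} {N : ℕ} (h : (∑ i, β i) < N) : xmon x β ∈ lowMon S x N :=
  Submodule.subset_span ⟨β, h, rfl⟩

lemma lowMon_mono {N M : ℕ} (h : N ≤ M) : lowMon S x N ≤ lowMon S x M :=
  Submodule.span_mono (Set.image_mono fun _ hβ => lt_of_lt_of_le hβ h)

lemma skew_coeff_zero (hli : LinearIndependent S (xmon x)) (α : Fin n → ℕ) (s : S)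
    (h : (s : A) * xmon x α ∈ lowMon S x (∑ i, α i)) : s = 0 := by
  rw [lowMon, Finsupp.mem_span_image_iff_linearCombination] at h
  obtain ⟨l, hl, hsum⟩ := h
  have h0 : Finsupp.linearCombination S (xmon x) (l - Finsupp.single α s) = 0 := by
    rw [map_sub, hsum, Finsupp.linearCombination_single, skew_smul_eq, sub_self]
  have hls := linearIndependent_iff.mp hli _ h0
  have hle : l = Finsupp.single α s := by rwa [sub_eq_zero] at hls
  by_contra hs
  have hmem : α ∈ l.support := by
    rw [hle]
    simpa [Finsupp.mem_support_iff] using hs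
  have hlt : (∑ i, α i) < (∑ i, α i) := (Finsupp.mem_supported _ _).mp hl hmem
  exact lt_irrefl _ hlt

lemma skew_coeff_unique (hli : LinearIndependent S (xmon x)) (α : Fin n → ℕ)
    {c c' : S} {p p' : A} (hp : p ∈ lowMon S x (∑ i, α i)) (hp' : p' ∈ lowMon S x (∑ i, α i))
    (h : (c : A) * xmon x α + p = (c' : A) * xmon x α + p') : c = c' ∧ p = p' := by
  have key : ((c - c' : S) : A) * xmon x α ∈ lowMon S x (∑ i, α i) := by
    have heq : ((c - c' : S) : A) * xmon x α = p' - p := by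
      push_cast
      rw [sub_mul, sub_eq_sub_iff_add_eq_add, h, add_comm]
    rw [heq]
    exact Submodule.sub_mem _ hp' hp
  have hcc := skew_coeff_zero S x hli α _ key
  have hc : c = c' := by rwa [sub_eq_zero] at hcc
  refine ⟨hc, ?_⟩
  subst hc
  exact add_left_cancel h

lemma prod_peel (i : Fin n) : ∀ (L : List (Fin n)), L.Pairwise (· < ·) → i ∈ L →
    ∀ (α : Fin n → ℕ), (∀ j, j < i → α j = 0) → α i ≠ 0 →
    (L.map fun j => x j ^ α j).prod
      = x i * (L.map fun j => x j ^ (Function.update α i (α i - 1)) j).prod := by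
  intro L
  induction L with
  | nil => simp
  | cons a L ih =>
    intro hp hi α hsmall hne
    rcases List.mem_cons.mp hi with h | h
    · subst h
      have hnotmem : i ∉ L := fun hmem => lt_irrefl i ((List.pairwise_cons.mp hp).1 i hmem)
      simp only [List.map_cons, List.prod_cons]
      have h1 : x i ^ α i = x i * x i ^ (α i - 1) := by
        conv_lhs => rw [← Nat.succ_pred_eq_of_pos (Nat.pos_of_ne_zero hne)]
        rw [pow_succ']
        rfl
      have h2 : (L.map fun j => x j ^ (Function.update α i (α i - 1)) j)
          = L.map fun j => x j ^ α j := by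
        apply List.map_congr_left
        intro j hj
        rw [Function.update_of_ne (fun hja => hnotmem (by rw [← hja]; exact hj))]
      rw [h2, Function.update_self, h1, mul_assoc]
    · have ha_lt : a < i := (List.pairwise_cons.mp hp).1 i h
      have hαa : α a = 0 := hsmall a ha_lt
      simp only [List.map_cons, List.prod_cons]
      rw [Function.update_of_ne (ne_of_lt ha_lt), hαa, pow_zero, one_mul, one_mul]
      exact ih (List.pairwise_cons.mp hp).2 h α hsmall hne

lemma xmon_peel (α : Fin n → ℕ) (i : Fin n) (hsmall : ∀ j, j < i → α j = 0) (hne : α i ≠ 0) :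
    xmon x α = x i * xmon x (Function.update α i (α i - 1)) :=
  prod_peel x i (List.finRange n) (List.pairwise_lt_finRange n) (List.mem_finRange i) α hsmall hne

lemma xmon_eq_one (α : Fin n → ℕ) (h : ∀ j, α j = 0) : xmon x α = 1 := by
  apply List.prod_eq_one
  intro a ha
  obtain ⟨j, _, rfl⟩ := List.mem_map.mp ha
  rw [h j, pow_zero]

lemma sum_update_succ (α : Fin n → ℕ) (i : Fin n) (hne : α i ≠ 0) :
    (∑ j, Function.update α i (α i - 1) j) + 1 = ∑ j, α j := by
  rw [Finset.sum_update_of_mem (Finset.mem_univ i), ← Finset.erase_eq,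
     ← Finset.add_sum_erase _ α (Finset.mem_univ i)]
  omega

lemma exists_min_index (α : Fin n → ℕ) (h : (∑ j, α j) ≠ 0) :
    ∃ i : Fin n, α i ≠ 0 ∧ ∀ j, j < i → α j = 0 := by
  have hex : ∃ i, α i ≠ 0 := by
    by_contra hc
    push_neg at hc
    exact h (Finset.sum_eq_zero fun j _ => hc j)
  obtain ⟨i0, hi0⟩ := hex
  set T := Finset.univ.filter (fun j : Fin n => α j ≠ 0) with hT
  have hTne : T.Nonempty := ⟨i0, by simp [hT, hi0]⟩
  refine ⟨T.min' hTne, ?_, ?_⟩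
  · have := T.min'_mem hTne
    simp [hT] at this
    exact this
  · intro j hj
    by_contra hjne
    have hjT : j ∈ T := by simp [hT, hjne]
    exact absurd (T.min'_le j hjT) (not_le.mpr hj)

lemma sigmaPow_eq_id {T : Type} (F : Fin n → T → T) (α : Fin n → ℕ) (h : ∀ j, α j = 0) :
    sigmaPow F α = id := by
  unfold sigmaPow
  generalize List.finRange n = L
  induction L with
  | nil => rfl
  | cons a L ih => simp [h a, ih]

lemma foldr_congr_fn {T : Type} (F : Fin n → T → T) (α β : Fin n → ℕ) :
    ∀ L : List (Fin n), (∀ j ∈ L, α j = β j) →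
    L.foldr (fun j g => (F j)^[α j] ∘ g) id = L.foldr (fun j g => (F j)^[β j] ∘ g) id := by
  intro L
  induction L with
  | nil => intro _; rfl
  | cons a L ih =>
    intro h
    simp only [List.foldr_cons]
    rw [h a (List.mem_cons_self), ih (fun j hj => h j (List.mem_cons_of_mem _ hj))]

lemma sigmaPow_peel {T : Type} (F : Fin n → T → T) (α : Fin n → ℕ) (i : Fin n)
    (hsmall : ∀ j, j < i → α j = 0) (hne : α i ≠ 0) :
    sigmaPow F α = F i ∘ sigmaPow F (Function.update α i (α i - 1)) := by
  unfold sigmaPow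
  have key : ∀ L : List (Fin n), L.Pairwise (· < ·) → i ∈ L →
      L.foldr (fun j g => (F j)^[α j] ∘ g) id
        = F i ∘ L.foldr (fun j g => (F j)^[(Function.update α i (α i - 1)) j] ∘ g) id := by
    intro L
    induction L with
    | nil => simp
    | cons a L ih =>
      intro hp hi
      rcases List.mem_cons.mp hi with h | h
      · subst h
        have hnotmem : i ∉ L := fun hmem => lt_irrefl i ((List.pairwise_cons.mp hp).1 i hmem)
        simp only [List.foldr_cons]
        have h2 : L.foldr (fun j g => (F j)^[(Function.update α i (α i - 1)) j] ∘ g) id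
            = L.foldr (fun j g => (F j)^[α j] ∘ g) id :=
          foldr_congr_fn F _ _ L (fun j hj =>
            Function.update_of_ne (fun hja => hnotmem (by rw [← hja]; exact hj)) _ _)
        rw [h2, Function.update_self]
        conv_lhs => rw [← Nat.succ_pred_eq_of_pos (Nat.pos_of_ne_zero hne)]
        rw [Function.iterate_succ']
        rfl
      · have ha_lt : a < i := (List.pairwise_cons.mp hp).1 i h
        have hαa : α a = 0 := hsmall a ha_lt
        simp only [List.foldr_cons]
        rw [Function.update_of_ne (ne_of_lt ha_lt), hαa, Function.iterate_zero,
          Function.id_comp, Function.id_comp, ih (List.pairwise_cons.mp hp).2 h]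
  exact key (List.finRange n) (List.pairwise_lt_finRange n) (List.mem_finRange i)

lemma mul_lowMon_aux (hA : IsSkewPBWExt S x) (j : Fin n) {N : ℕ}
    (hK : ∀ γ : Fin n → ℕ, (∑ t, γ t) < N → x j * xmon x γ ∈ lowMon S x ((∑ t, γ t) + 2))
    {p : A} (hp : p ∈ lowMon S x N) : x j * p ∈ lowMon S x (N + 1) := by
  rw [lowMon, Submodule.mem_span_set'] at hp
  obtain ⟨m, f, g, rfl⟩ := hp
  rw [Finset.mul_sum]
  apply Submodule.sum_mem
  intro t _
  obtain ⟨γ, hγ, hgt⟩ := (g t).2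
  have hγ' : (∑ t, γ t) < N := hγ
  have hgA : ((g t : A)) = xmon x γ := hgt.symm
  rcases eq_or_ne (f t) 0 with h0 | h0
  · simp [h0]
  · have hfa : ((f t : A)) ∈ S := (f t).2
    have hfne : ((f t : A)) ≠ 0 := by
      simpa [ZeroMemClass.coe_eq_zero] using h0
    obtain ⟨c, hcS, hc0, hd⟩ := hA.comm_coeff j (f t) hfa hfne
    have hexp : x j * ((f t : A) * (g t : A))
        = c * (x j * (g t : A)) + (x j * (f t : A) - c * x j) * (g t : A) := by
      noncomm_ring
    have hsplit : x j * (f t • (g t : A)) =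
        (⟨c, hcS⟩ : S) • (x j * (g t : A)) + (⟨_, hd⟩ : S) • (g t : A) := by
      rw [skew_smul_eq, skew_smul_eq, skew_smul_eq]
      exact hexp
    rw [hsplit]
    apply Submodule.add_mem
    · apply Submodule.smul_mem
      rw [hgA]
      exact lowMon_mono S x (by omega) (hK γ hγ')
    · apply Submodule.smul_mem
      rw [hgA]
      exact xmon_mem_lowMon S x (by omega)

lemma xvar_mul_xmon (hA : IsSkewPBWExt S x) :
    ∀ (k : ℕ) (β : Fin n → ℕ) (i : Fin n), (∑ j, β j) * (n + 1) + i.val ≤ k →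
    x i * xmon x β ∈ lowMon S x ((∑ j, β j) + 2) := by
  intro k
  induction k using Nat.strong_induction_on with
  | _ k IH =>
  have IH' : ∀ (β : Fin n → ℕ) (i : Fin n), (∑ j, β j) * (n + 1) + i.val < k →
      x i * xmon x β ∈ lowMon S x ((∑ j, β j) + 2) := fun β i h => IH _ h β i le_rfl
  intro β i hk
  by_cases hz : ∀ j, j < i → β j = 0
  · set α := Function.update β i (β i + 1) with hαdef
    have hsm : ∀ j, j < i → α j = 0 := fun j hj => by
      rw [hαdef, Function.update_of_ne (ne_of_lt hj)]; exact hz j hj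
    have hαi : α i ≠ 0 := by simp [hαdef]
    have hpe := xmon_peel x α i hsm hαi
    have hupd : Function.update α i (α i - 1) = β := by
      rw [hαdef]
      simp
    have hsum := sum_update_succ α i hαi
    rw [hupd] at hpe hsum
    rw [← hpe]
    exact xmon_mem_lowMon S x (by omega)
  · push_neg at hz
    obtain ⟨j0, hj0lt, hj0ne⟩ := hz
    have hsne : (∑ t, β t) ≠ 0 := by
      intro h
      exact hj0ne (Finset.sum_eq_zero_iff.mp h j0 (Finset.mem_univ _))
    obtain ⟨j, hjne, hjmin⟩ := exists_min_index β hsne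
    have hji : j < i := by
      by_contra hge
      exact hj0ne (hjmin j0 (lt_of_lt_of_le hj0lt (not_lt.mp hge)))
    have hjvi : j.val < i.val := hji
    set β' := Function.update β j (β j - 1) with hβ'def
    have hpe := xmon_peel x β j hjmin hjne
    have hsum := sum_update_succ β j hjne
    rw [← hβ'def] at hpe hsum
    have hexpk : (∑ t, β t) * (n + 1) = (∑ t, β' t) * (n + 1) + (n + 1) := by
      rw [← hsum]; ring
    obtain ⟨c, hcS, hc0, hL⟩ := hA.comm_vars j i
    set L := x i * x j - c * (x j * x i) with hLdef
    have hq : x i * xmon x β' ∈ lowMon S x ((∑ t, β t) + 1) := by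
      have := IH' β' i (by omega)
      exact lowMon_mono S x (by omega) this
    have hmem1 : x j * (x i * xmon x β') ∈ lowMon S x ((∑ t, β t) + 1 + 1) := by
      apply mul_lowMon_aux S x hA j ?_ hq
      intro γ hγ
      have hmul : (∑ t, γ t) * (n + 1) ≤ (∑ t, β t) * (n + 1) :=
        Nat.mul_le_mul (by omega) le_rfl
      exact IH' γ j (by omega)
    have hLmem : L * xmon x β' ∈ lowMon S x ((∑ t, β t) + 2) := by
      rw [Submodule.mem_span_set'] at hL
      obtain ⟨m, f, g, hgsum⟩ := hL
      rw [← hgsum, Finset.sum_mul]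
      apply Submodule.sum_mem
      intro t _
      rw [skew_smul_eq, mul_assoc, ← skew_smul_eq]
      apply Submodule.smul_mem
      rcases Set.mem_insert_iff.mp (g t).2 with h1 | hx2
      · rw [h1, one_mul]
        exact xmon_mem_lowMon S x (by omega)
      · obtain ⟨w, hw⟩ := hx2
        rw [← hw]
        have := IH' β' w (by have := w.isLt; omega)
        exact lowMon_mono S x (by omega) this
    have hij : x i * x j = c * (x j * x i) + L := by rw [hLdef]; noncomm_ring
    have hexp2 : x i * xmon x β
        = (⟨c, hcS⟩ : S) • (x j * (x i * xmon x β')) + L * xmon x β' := by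
      rw [skew_smul_eq, hpe, ← mul_assoc, hij]
      show (c * (x j * x i) + L) * xmon x β' = _
      noncomm_ring
    rw [hexp2]
    apply Submodule.add_mem
    · apply Submodule.smul_mem
      exact lowMon_mono S x (by omega) hmem1
    · exact hLmem

lemma xvar_mul_lowMon (hA : IsSkewPBWExt S x) (i : Fin n) {N : ℕ} {p : A}
    (hp : p ∈ lowMon S x N) : x i * p ∈ lowMon S x (N + 1) :=
  mul_lowMon_aux S x hA i (fun γ _ => xvar_mul_xmon S x hA _ γ i le_rfl) hp

lemma skew_exists (hA : IsSkewPBWExt S x) :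
    ∀ (k : ℕ) (α : Fin n → ℕ), (∑ j, α j) ≤ k → ∀ r : S, r ≠ 0 →
    ∃ c : S, c ≠ 0 ∧ ∃ p ∈ lowMon S x (∑ j, α j),
      xmon x α * (r : A) = (c : A) * xmon x α + p := by
  intro k
  induction k with
  | zero =>
    intro α hα r hr
    refine ⟨r, hr, 0, Submodule.zero_mem _, ?_⟩
    have h0 : ∀ j, α j = 0 := fun j =>
      Finset.sum_eq_zero_iff.mp (Nat.le_zero.mp hα) j (Finset.mem_univ j)
    rw [xmon_eq_one x α h0]
    simp
  | succ k ih =>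
    intro α hα r hr
    rcases Nat.eq_zero_or_pos (∑ j, α j) with hz | hpos
    · refine ⟨r, hr, 0, Submodule.zero_mem _, ?_⟩
      have h0 : ∀ j, α j = 0 := fun j =>
        Finset.sum_eq_zero_iff.mp hz j (Finset.mem_univ j)
      rw [xmon_eq_one x α h0]
      simp
    · obtain ⟨i, hine, himin⟩ := exists_min_index α hpos.ne'
      set α' := Function.update α i (α i - 1) with hα'def
      have hpe := xmon_peel x α i himin hine
      have hsum := sum_update_succ α i hine
      rw [← hα'def] at hpe hsum
      obtain ⟨c', hc'ne, p', hp', heq'⟩ := ih α' (by omega) r hr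
      have hc'A : ((c' : A)) ≠ 0 := by
        simpa [ZeroMemClass.coe_eq_zero] using hc'ne
      obtain ⟨cc, hccS, hccne, hd⟩ := hA.comm_coeff i (c' : A) c'.2 hc'A
      refine ⟨⟨cc, hccS⟩, ?_, (⟨_, hd⟩ : S) • xmon x α' + x i * p', ?_, ?_⟩
      · intro h
        exact hccne (congrArg Subtype.val h)
      · apply Submodule.add_mem
        · exact Submodule.smul_mem _ _ (xmon_mem_lowMon S x (by omega))
        · exact lowMon_mono S x (by omega) (xvar_mul_lowMon S x hA i hp')
      · rw [hpe, mul_assoc, heq', skew_smul_eq]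
        show x i * ((c' : A) * xmon x α' + p')
          = cc * (x i * xmon x α')
            + ((x i * (c' : A) - cc * x i) * xmon x α' + x i * p')
        noncomm_ring
  
lemma skew_sigma (hA : IsSkewPBWExt S x) (σ : Fin n → S →+* S) (δ : Fin n → S → S)
    (hσ : ∀ (i : Fin n) (s : S), x i * (s : A) = ((σ i) s : A) * x i + (δ i s : A)) :
    ∀ (k : ℕ) (α : Fin n → ℕ), (∑ j, α j) ≤ k → ∀ r : S,
    ∃ p ∈ lowMon S x (∑ j, α j),
      xmon x α * (r : A) = ((sigmaPow (fun i => ⇑(σ i)) α r : S) : A) * xmon x α + p := by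
  intro k
  induction k with
  | zero =>
    intro α hα r
    refine ⟨0, Submodule.zero_mem _, ?_⟩
    have h0 : ∀ j, α j = 0 := fun j =>
      Finset.sum_eq_zero_iff.mp (Nat.le_zero.mp hα) j (Finset.mem_univ j)
    rw [xmon_eq_one x α h0, sigmaPow_eq_id _ α h0]
    simp
  | succ k ih =>
    intro α hα r
    rcases Nat.eq_zero_or_pos (∑ j, α j) with hz | hpos
    · refine ⟨0, Submodule.zero_mem _, ?_⟩
      have h0 : ∀ j, α j = 0 := fun j =>
        Finset.sum_eq_zero_iff.mp hz j (Finset.mem_univ j)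
      rw [xmon_eq_one x α h0, sigmaPow_eq_id _ α h0]
      simp
    · obtain ⟨i, hine, himin⟩ := exists_min_index α hpos.ne'
      set α' := Function.update α i (α i - 1) with hα'def
      have hpe := xmon_peel x α i himin hine
      have hspe := sigmaPow_peel (fun t => ⇑(σ t)) α i himin hine
      have hsum := sum_update_succ α i hine
      rw [← hα'def] at hpe hspe hsum
      obtain ⟨p', hp', heq'⟩ := ih α' (by omega) r
      set s' := sigmaPow (fun t => ⇑(σ t)) α' r with hs'
      refine ⟨((δ i s' : S) : A) * xmon x α' + x i * p', ?_, ?_⟩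
      · apply Submodule.add_mem
        · rw [← skew_smul_eq]
          exact Submodule.smul_mem _ _ (xmon_mem_lowMon S x (by omega))
        · exact lowMon_mono S x (by omega) (xvar_mul_lowMon S x hA i hp')
      · have hred : sigmaPow (fun t => ⇑(σ t)) α r = (σ i) s' := by
          rw [hspe]; rfl
        rw [hpe, mul_assoc, heq', hred, mul_add, ← mul_assoc, hσ i s']
        noncomm_ring

lemma xmon_mul_coeff (hA : IsSkewPBWExt S x) (β : Fin n → ℕ) (s : S) :
    xmon x β * (s : A) ∈ lowMon S x ((∑ j, β j) + 1) := by
  rcases eq_or_ne s 0 with rfl | hs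
  · simp
  · obtain ⟨c, hc, p, hp, heq⟩ := skew_exists S x hA _ β le_rfl s hs
    rw [heq]
    refine Submodule.add_mem _ ?_ (lowMon_mono S x (by omega) hp)
    rw [← skew_smul_eq]
    exact Submodule.smul_mem _ _ (xmon_mem_lowMon S x (by omega))

lemma lowMon_mul_coeff (hA : IsSkewPBWExt S x) {N : ℕ} {p : A}
    (hp : p ∈ lowMon S x N) (s : S) : p * (s : A) ∈ lowMon S x N := by
  rw [lowMon, Submodule.mem_span_set'] at hp
  obtain ⟨m, f, g, rfl⟩ := hp
  rw [Finset.sum_mul]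
  apply Submodule.sum_mem
  intro t _
  obtain ⟨γ, hγ, hgt⟩ := (g t).2
  have hγ' : (∑ t, γ t) < N := hγ
  rw [skew_smul_eq, mul_assoc, ← skew_smul_eq]
  apply Submodule.smul_mem
  rw [show ((g t : A)) = xmon x γ from hgt.symm]
  exact lowMon_mono S x (by omega) (xmon_mul_coeff S x hA γ s)

end Aux

/-- For every standard monomial `x^α` and every `0 ≠ r ∈ R` there exist unique `0 ≠ r_α ∈ R` and
`p_{α,r} ∈ A` with `x^α r = r_α x^α + p_{α,r}` and `p_{α,r} = 0` or `deg p_{α,r} < |α|`;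
moreover `r_α = σ^α(r)` for the induced endomorphisms `σᵢ`, and if `r` is left invertible
then so is `r_α`. -/
theorem skewPBW_monomial_coeff {A : Type} [Ring A] {n : ℕ}
    (S : Subring A) (x : Fin n → A) (hA : IsSkewPBWExt S x)
    (α : Fin n → ℕ) (r : S) (hr : r ≠ 0) :
    (∃! rp : S × A, rp.1 ≠ 0 ∧ rp.2 ∈ lowMon S x (∑ i, α i) ∧
        xmon x α * (r : A) = (rp.1 : A) * xmon x α + rp.2) ∧
    (∀ (σ : Fin n → S →+* S) (δ : Fin n → S → S),
      (∀ (i : Fin n) (s : S), x i * (s : A) = ((σ i) s : A) * x i + (δ i s : A)) →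
      ∀ (c : S) (p : A), c ≠ 0 → p ∈ lowMon S x (∑ i, α i) →
        xmon x α * (r : A) = (c : A) * xmon x α + p →
        c = sigmaPow (fun i => ⇑(σ i)) α r) ∧
    ((∃ u : S, u * r = 1) →
      ∀ (c : S) (p : A), c ≠ 0 → p ∈ lowMon S x (∑ i, α i) →
        xmon x α * (r : A) = (c : A) * xmon x α + p →
        ∃ u : S, u * c = 1) := by
  obtain ⟨c₀, hc₀, p₀, hp₀, heq₀⟩ := skew_exists S x hA _ α le_rfl r hr
  refine ⟨⟨(c₀, p₀), ⟨hc₀, hp₀, heq₀⟩, ?_⟩, ?_, ?_⟩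
  · rintro ⟨c, p⟩ ⟨hc, hp, heq⟩
    obtain ⟨h1, h2⟩ :=
      skew_coeff_unique S x hA.linearIndependent α hp hp₀ (heq.symm.trans heq₀)
    rw [Prod.mk.injEq]
    exact ⟨h1, h2⟩
  · intro σ δ hσ c p hc hp heq
    obtain ⟨p₂, hp₂, heq₂⟩ := skew_sigma S x hA σ δ hσ _ α le_rfl r
    exact (skew_coeff_unique S x hA.linearIndependent α hp hp₂ (heq.symm.trans heq₂)).1
  · rintro ⟨u, hu⟩ c p hc hp heq
    have hune : u ≠ 0 := by
      intro h
      have h10 : (1 : S) = 0 := by rw [← hu, h, zero_mul]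
      exact hr (by rw [← mul_one r, h10, mul_zero])
    obtain ⟨u₁, hu₁, q, hq, hequ⟩ := skew_exists S x hA _ α le_rfl u hune
    refine ⟨u₁, ?_⟩
    have e1 : xmon x α * ((u : A) * (r : A))
        = ((u₁ : A) * (c : A)) * xmon x α + ((u₁ : A) * p + q * (r : A)) := by
      rw [← mul_assoc, hequ, add_mul, mul_assoc, heq]
      noncomm_ring
    have e2 : xmon x α * ((u : A) * (r : A)) = xmon x α := by
      rw [← Subring.coe_mul, hu, OneMemClass.coe_one, mul_one]
    have hmem : (u₁ : A) * p + q * (r : A) ∈ lowMon S x (∑ i, α i) := by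
      refine Submodule.add_mem _ ?_ (lowMon_mul_coeff S x hA hq r)
      rw [← skew_smul_eq]
      exact Submodule.smul_mem _ _ hp
    have e3 : ((u₁ * c : S) : A) * xmon x α + ((u₁ : A) * p + q * (r : A))
        = ((1 : S) : A) * xmon x α + 0 := by
      rw [Subring.coe_mul, ← e1, e2, OneMemClass.coe_one, one_mul, add_zero]
    exact (skew_coeff_unique S x hA.linearIndependent α hmem (Submodule.zero_mem _) e3).1
end

section
/- Let A be a skew PBW extension of a ring R with respect to x₁,…,xₙ. Then for all α, β ∈ ℕⁿ there exist unique elements c_{α,β} ∈ R and p_{α,β} ∈ A such that x^α x^β = c_{α,β} x^{α+β} + p_{α,β}, where c_{α,β} is left invertible in R and p_{α,β} = 0 or deg(p_{α,β}) < |α+β| := (α₁+β₁)+⋯+(αₙ+βₙ). -/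
namespace SkewPBW

variable {A : Type} [Ring A] {n : ℕ} {S : Subring A} {x : Fin n → A}

lemma xmon_eq_of_prefix_zero (x : Fin n → A) (i : Fin n)
    (γ : Fin n → ℕ) (h : ∀ k, k < i → γ k = 0) :
    xmon x γ = x i ^ γ i *
      (((List.finRange n).drop (i.val+1)).map (fun k => x k ^ γ k)).prod := by
  have hlen : (i : ℕ) < (List.finRange n).length := by simp
  conv_lhs => rw [xmon, ← List.take_append_drop i.val (List.finRange n), List.map_append,
    List.prod_append, List.drop_eq_getElem_cons hlen]
  have h1 : (((List.finRange n).take i.val).map (fun k => x k ^ γ k)).prod = 1 := by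
    apply List.prod_eq_one
    intro a ha
    obtain ⟨k, hk, rfl⟩ := List.mem_map.1 ha
    obtain ⟨j, hj, rfl⟩ := List.mem_iff_getElem.1 hk
    have hji : j < i.val := lt_of_lt_of_le hj (by simp [List.length_take])
    have : ((List.finRange n).take i.val)[j] = (⟨j, lt_trans hji i.isLt⟩ : Fin n) := by
      simp [List.getElem_take]
    rw [this, h _ (by simpa [Fin.lt_def] using hji), pow_zero]
  rw [h1, one_mul, List.map_cons, List.prod_cons]
  congr 1 <;> simp

lemma xmon_factor (x : Fin n → A) (i : Fin n)
    (γ : Fin n → ℕ) (h : ∀ k, k < i → γ k = 0) :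
    x i * xmon x γ = xmon x (γ + Pi.single i 1) := by
  have h' : ∀ k, k < i → (γ + Pi.single i 1 : Fin n → ℕ) k = 0 := by
    intro k hk
    simp [h k hk, Pi.single_eq_of_ne (ne_of_lt hk)]
  rw [xmon_eq_of_prefix_zero x i γ h, xmon_eq_of_prefix_zero x i _ h']
  have hT : (((List.finRange n).drop (i.val+1)).map
        (fun k => x k ^ (γ + Pi.single i 1 : Fin n → ℕ) k))
      = ((List.finRange n).drop (i.val+1)).map (fun k => x k ^ γ k) := by
    apply List.map_congr_left
    intro k hk
    obtain ⟨j, hj, hkj⟩ := List.mem_iff_getElem.1 hk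
    have hval : (k : ℕ) = ↑i + 1 + j := by rw [← hkj]; simp
    have hki : k ≠ i := by
      intro hc; rw [hc] at hval; omega
    simp [Pi.single_eq_of_ne hki]
  rw [hT]
  simp only [Pi.add_apply, Pi.single_eq_same]
  rw [← mul_assoc, ← pow_succ']

lemma xmon_zero (x : Fin n → A) : xmon x (0 : Fin n → ℕ) = 1 := by
  apply List.prod_eq_one; simp [xmon]

lemma xmon_single (x : Fin n → A) (i : Fin n) : xmon x (Pi.single i 1) = x i := by
  have := xmon_factor x i 0 (fun k _ => rfl)
  rw [xmon_zero, mul_one, zero_add] at this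
  exact this.symm

lemma xmon_pair (x : Fin n → A) {j i : Fin n} (h : j < i) :
    xmon x (Pi.single j 1 + Pi.single i 1) = x j * x i := by
  have hpre : ∀ k, k < j → (Pi.single i 1 : Fin n → ℕ) k = 0 := by
    intro k hk
    simp [Pi.single_eq_of_ne (ne_of_lt (lt_trans hk h))]
  have := xmon_factor x j (Pi.single i 1) hpre
  rw [xmon_single, add_comm] at this
  exact this.symm

lemma sum_single (i : Fin n) : (∑ k, (Pi.single i 1 : Fin n → ℕ) k) = 1 := by
  simp [Finset.sum_pi_single']

lemma sum_add_single (γ : Fin n → ℕ) (i : Fin n) :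
    (∑ k, (γ + Pi.single i 1 : Fin n → ℕ) k) = (∑ k, γ k) + 1 := by
  simp [Finset.sum_add_distrib, Finset.sum_pi_single']

lemma xmon_mem_lowMon {γ : Fin n → ℕ} {N : ℕ} (h : (∑ k, γ k) < N) :
    xmon x γ ∈ lowMon S x N :=
  Submodule.subset_span ⟨γ, h, rfl⟩

lemma lowMon_mono {N M : ℕ} (h : N ≤ M) : lowMon S x N ≤ lowMon S x M :=
  Submodule.span_mono (Set.image_mono fun _ hγ => lt_of_lt_of_le hγ h)

lemma indep2 (hA : IsSkewPBWExt S x) {γ δ : Fin n → ℕ} (hne : γ ≠ δ) (a b : S)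
    (h : (a : A) * xmon x γ + (b : A) * xmon x δ = 0) : (a : A) = 0 ∧ (b : A) = 0 := by
  have hinj : Function.Injective ![γ, δ] := by
    intro s t hst
    fin_cases s <;> fin_cases t <;> simp_all <;>
      first
      | rfl
      | exact absurd hst hne
      | exact absurd hst.symm hne
  have h2 : LinearIndependent S ![xmon x γ, xmon x δ] := by
    have := hA.linearIndependent.comp ![γ, δ] hinj
    convert this using 1
    ext s
    fin_cases s <;> rfl
  have := LinearIndependent.pair_iff.1 h2 a b h
  exact ⟨by rw [this.1]; rfl, by rw [this.2]; rfl⟩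

lemma coeffs_unique (hA : IsSkewPBWExt S x) (i : Fin n) {a b : A}
    (ha : a ∈ S) (hb : b ∈ S) (h : a * x i + b = 0) : a = 0 ∧ b = 0 := by
  have hne : (Pi.single i 1 : Fin n → ℕ) ≠ 0 := by
    intro hc
    have := congrFun hc i
    simp at this
  exact indep2 hA hne ⟨a, ha⟩ ⟨b, hb⟩ (by rw [xmon_single, xmon_zero, mul_one]; exact h)

lemma sigma_left_inv [Nontrivial A] (hA : IsSkewPBWExt S x) (i : Fin n) {r : A} (hr : r ∈ S)
    (hinv : ∃ u ∈ S, u * r = 1) :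
    ∃ c d : A, c ∈ S ∧ d ∈ S ∧ (∃ v ∈ S, v * c = 1) ∧ x i * r = c * x i + d := by
  obtain ⟨u, hu, hur⟩ := hinv
  have hr0 : r ≠ 0 := by
    rintro rfl
    rw [mul_zero] at hur
    exact zero_ne_one hur
  have hu0 : u ≠ 0 := by
    rintro rfl
    rw [zero_mul] at hur
    exact zero_ne_one hur
  obtain ⟨c, hc, hc0, hd⟩ := hA.comm_coeff i r hr hr0
  obtain ⟨cu, hcu, hcu0, hdu⟩ := hA.comm_coeff i u hu hu0
  set d := x i * r - c * x i with hd_def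
  set du := x i * u - cu * x i with hdu_def
  have hxir : x i * r = c * x i + d := by rw [hd_def]; noncomm_ring
  have hxiu : x i * u = cu * x i + du := by rw [hdu_def]; noncomm_ring
  have key : (cu * c - 1) * x i + (cu * d + du * r) = 0 := by
    have e3 : cu * c * x i + (cu * d + du * r) = x i := by
      have : x i * (u * r) = x i := by rw [hur, mul_one]
      calc cu * c * x i + (cu * d + du * r)
          = cu * (c * x i + d) + du * r := by noncomm_ring
        _ = cu * (x i * r) + du * r := by rw [hxir]
        _ = (cu * x i + du) * r := by noncomm_ring
        _ = (x i * u) * r := by rw [hxiu]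
        _ = x i * (u * r) := by rw [mul_assoc]
        _ = x i := this
    rw [sub_mul, one_mul, sub_add_eq_add_sub, e3, sub_self]
  have hmem1 : cu * c - 1 ∈ S := sub_mem (mul_mem hcu hc) (one_mem S)
  have hmem2 : cu * d + du * r ∈ S := add_mem (mul_mem hcu hd) (mul_mem hdu hr)
  obtain ⟨h1, _⟩ := coeffs_unique hA i hmem1 hmem2 key
  exact ⟨c, d, hc, hd, ⟨cu, hcu, sub_eq_zero.1 h1⟩, hxir⟩

lemma span_insert_le : Submodule.span S (insert (1 : A) (Set.range x)) ≤ lowMon S x 2 := by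
  apply Submodule.span_le.2
  rintro a (rfl | ⟨k, rfl⟩)
  · exact Submodule.subset_span ⟨0, by simp, xmon_zero x⟩
  · exact Submodule.subset_span ⟨Pi.single k 1, by simp [sum_single], xmon_single x k⟩

lemma comm_vars_left_inv [Nontrivial A] (hA : IsSkewPBWExt S x) {j i : Fin n} (hji : j < i) :
    ∃ q l : A, q ∈ S ∧ (∃ v ∈ S, v * q = 1) ∧
      l ∈ Submodule.span S (insert (1 : A) (Set.range x)) ∧
      x i * x j = q * (x j * x i) + l := by
  obtain ⟨q, hqS, hq0, hl⟩ := hA.comm_vars j i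
  obtain ⟨q', hq'S, hq'0, hl'⟩ := hA.comm_vars i j
  set l := x i * x j - q * (x j * x i) with hl_def
  set l' := x j * x i - q' * (x i * x j) with hl'_def
  have e1 : x i * x j = q * (x j * x i) + l := by rw [hl_def]; noncomm_ring
  have e2 : x j * x i = q' * (x i * x j) + l' := by rw [hl'_def]; noncomm_ring
  have key : ((⟨q' * q - 1, sub_mem (mul_mem hq'S hqS) (one_mem S)⟩ : S))
      • xmon x (Pi.single j 1 + Pi.single i 1) = -(q' * l + l') := by
    show (q' * q - 1) * xmon x (Pi.single j 1 + Pi.single i 1) = -(q' * l + l')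
    rw [xmon_pair x hji]
    have : x j * x i = q' * q * (x j * x i) + (q' * l + l') := by
      calc x j * x i = q' * (x i * x j) + l' := e2
        _ = q' * (q * (x j * x i) + l) + l' := by rw [e1]
        _ = q' * q * (x j * x i) + (q' * l + l') := by noncomm_ring
    calc (q' * q - 1) * (x j * x i)
        = q' * q * (x j * x i) - x j * x i := by noncomm_ring
      _ = q' * q * (x j * x i) - (q' * q * (x j * x i) + (q' * l + l')) := by rw [← this]
      _ = -(q' * l + l') := by noncomm_ring
  have hmem : -(q' * l + l') ∈ lowMon S x 2 := by
    apply neg_mem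
    apply Submodule.add_mem
    · have : q' * l = (⟨q', hq'S⟩ : S) • l := rfl
      rw [this]
      exact Submodule.smul_mem _ _ (span_insert_le hl)
    · exact span_insert_le hl'
  have hsub : lowMon S x 2 ≤ Submodule.span S
      (xmon x '' (Set.univ \ {Pi.single j 1 + Pi.single i 1})) := by
    apply Submodule.span_mono
    apply Set.image_mono
    intro γ hγ
    refine ⟨trivial, ?_⟩
    intro hc
    rw [Set.mem_singleton_iff] at hc
    subst hc
    simp only [Set.mem_setOf_eq] at hγ
    rw [sum_add_single, sum_single] at hγ
    omega
  have := linearIndependent_iff_eq_zero_of_smul_mem_span.mp hA.linearIndependent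
    (Pi.single j 1 + Pi.single i 1) _ (key ▸ hsub hmem)
  have hq'q : q' * q - 1 = 0 := by
    have := congrArg (Subtype.val) this
    simpa using this
  exact ⟨q, l, hqS, ⟨q', hq'S, sub_eq_zero.1 hq'q⟩, hl, e1⟩

lemma xi_mul_xmon [Nontrivial A] (hA : IsSkewPBWExt S x) (m : ℕ) :
    ∀ (i : Fin n) (γ : Fin n → ℕ), (∑ k, γ k) = m →
    ∃ c : A, c ∈ S ∧ (∃ v ∈ S, v * c = 1) ∧
      x i * xmon x γ - c * xmon x (γ + Pi.single i 1) ∈ lowMon S x (m + 1) := by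
  induction m using Nat.strong_induction_on with
  | _ m IH =>
  have hC : ∀ (j : Fin n) (N : ℕ), N ≤ m → ∀ a ∈ lowMon S x N,
      x j * a ∈ lowMon S x (N + 1) := by
    intro j N hN a ha
    induction ha using Submodule.span_induction with
    | mem a hamem =>
      obtain ⟨γ', hγ', rfl⟩ := hamem
      simp only [Set.mem_setOf_eq] at hγ'
      obtain ⟨c, hcS, _, hlow⟩ := IH (∑ k, γ' k) (lt_of_lt_of_le hγ' hN) j γ' rfl
      have heq : x j * xmon x γ' = c * xmon x (γ' + Pi.single j 1)
          + (x j * xmon x γ' - c * xmon x (γ' + Pi.single j 1)) := by noncomm_ring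
      rw [heq]
      apply Submodule.add_mem
      · have h2 : c * xmon x (γ' + Pi.single j 1)
            = (⟨c, hcS⟩ : S) • xmon x (γ' + Pi.single j 1) := rfl
        rw [h2]
        exact Submodule.smul_mem _ _ (xmon_mem_lowMon (by rw [sum_add_single]; omega))
      · exact lowMon_mono (by omega) hlow
    | zero => rw [mul_zero]; exact Submodule.zero_mem _
    | add a b _ _ pa pb => rw [mul_add]; exact Submodule.add_mem _ pa pb
    | smul r a hmem pa =>
      by_cases hr0 : (r : A) = 0
      · have h0 : r • a = 0 := by rw [show r • a = (r : A) * a from rfl, hr0, zero_mul]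
        rw [h0, mul_zero]; exact Submodule.zero_mem _
      · obtain ⟨c, hcS, _, hd⟩ := hA.comm_coeff j r r.2 hr0
        have heq : x j * (r • a) = c * (x j * a) + (x j * (r : A) - c * x j) * a := by
          show x j * ((r : A) * a) = _
          noncomm_ring
        rw [heq]
        apply Submodule.add_mem
        · exact (show c * (x j * a) = (⟨c, hcS⟩ : S) • (x j * a) from rfl) ▸
            Submodule.smul_mem _ _ pa
        · have h3 : (x j * (r : A) - c * x j) * a = (⟨_, hd⟩ : S) • a := rfl
          rw [h3]
          exact Submodule.smul_mem _ _ (lowMon_mono (by omega) hmem)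
  intro i γ hγ
  by_cases hcase : ∀ k, k < i → γ k = 0
  · refine ⟨1, one_mem S, ⟨1, one_mem S, one_mul 1⟩, ?_⟩
    rw [one_mul, xmon_factor x i γ hcase, sub_self]
    exact Submodule.zero_mem _
  · push_neg at hcase
    obtain ⟨k₀, hk₀i, hk₀⟩ := hcase
    set T : Finset (Fin n) := Finset.univ.filter (fun k => γ k ≠ 0) with hT
    have hTne : T.Nonempty := ⟨k₀, by simp [hT, hk₀]⟩
    set j := T.min' hTne with hjdef
    have hji : j < i := lt_of_le_of_lt (T.min'_le k₀ (by simp [hT, hk₀])) hk₀i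
    have hjmin : ∀ k, k < j → γ k = 0 := by
      intro k hk
      by_contra hne
      exact absurd (T.min'_le k (by simp [hT, hne])) (not_le.2 hk)
    have hjmem : γ j ≠ 0 := by
      have := T.min'_mem hTne
      simp only [hT, Finset.mem_filter, Finset.mem_univ, true_and] at this
      exact this
    set γ' : Fin n → ℕ := Function.update γ j (γ j - 1) with hγ'def
    have hγdecomp : γ = γ' + Pi.single j 1 := by
      funext k
      by_cases hkj : k = j
      · subst hkj
        simp only [hγ'def, Pi.add_apply, Function.update_self, Pi.single_eq_same]
        omega
      · simp [hγ'def, Function.update_of_ne hkj, Pi.single_eq_of_ne hkj]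
    have hγ'pre : ∀ k, k < j → γ' k = 0 := by
      intro k hk
      rw [hγ'def, Function.update_of_ne (ne_of_lt hk)]
      exact hjmin k hk
    have hsum' : (∑ k, γ' k) + 1 = m := by
      rw [← sum_add_single γ' j, ← hγdecomp]; exact hγ
    have hm1 : (∑ k, γ' k) < m := by omega
    have E1 : xmon x γ = x j * xmon x γ' := by
      rw [xmon_factor x j γ' hγ'pre, ← hγdecomp]
    obtain ⟨q, l, hqS, hqinv, hlmem, E2⟩ := comm_vars_left_inv hA hji
    obtain ⟨c₁, hc₁S, hc₁inv, E3low⟩ := IH _ hm1 i γ' rfl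
    set δ : Fin n → ℕ := γ' + Pi.single i 1 with hδdef
    set p₁ : A := x i * xmon x γ' - c₁ * xmon x δ with hp₁def
    have E3 : x i * xmon x γ' = c₁ * xmon x δ + p₁ := by rw [hp₁def]; noncomm_ring
    have hp₁ : p₁ ∈ lowMon S x m := lowMon_mono (by omega) E3low
    obtain ⟨c₂, d, hc₂S, hdS, hc₂inv, E4⟩ := sigma_left_inv hA j hc₁S hc₁inv
    have hδpre : ∀ k, k < j → δ k = 0 := by
      intro k hk
      rw [hδdef]
      simp [hγ'pre k hk, Pi.single_eq_of_ne (ne_of_lt (lt_trans hk hji))]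
    have hδsum : (∑ k, δ k) = m := by
      rw [hδdef, sum_add_single]; omega
    have E5 : x j * xmon x δ = xmon x (γ + Pi.single i 1) := by
      rw [xmon_factor x j δ hδpre]
      congr 1
      rw [hδdef, hγdecomp, add_right_comm]
    have hL : ∀ lel ∈ Submodule.span S (insert (1 : A) (Set.range x)),
        lel * xmon x γ' ∈ lowMon S x (m + 1) := by
      intro lel hlel
      induction hlel using Submodule.span_induction with
      | mem a hamem =>
        rcases hamem with rfl | ⟨k, rfl⟩
        · rw [one_mul]
          exact xmon_mem_lowMon (by omega)
        · obtain ⟨c, hcS, _, hlow⟩ := IH _ hm1 k γ' rfl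
          have heq : x k * xmon x γ' = c * xmon x (γ' + Pi.single k 1)
              + (x k * xmon x γ' - c * xmon x (γ' + Pi.single k 1)) := by noncomm_ring
          rw [heq]
          apply Submodule.add_mem
          · have h2 : c * xmon x (γ' + Pi.single k 1)
                = (⟨c, hcS⟩ : S) • xmon x (γ' + Pi.single k 1) := rfl
            rw [h2]
            exact Submodule.smul_mem _ _ (xmon_mem_lowMon (by rw [sum_add_single]; omega))
          · exact lowMon_mono (by omega) hlow
      | zero => rw [zero_mul]; exact Submodule.zero_mem _
      | add a b _ _ pa pb => rw [add_mul]; exact Submodule.add_mem _ pa pb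
      | smul r a _ pa =>
        have h4 : (r • a) * xmon x γ' = r • (a * xmon x γ') := by
          show ((r : A) * a) * _ = (r : A) * _
          rw [mul_assoc]
        rw [h4]
        exact Submodule.smul_mem _ _ pa
    have main : x i * xmon x γ = (q * c₂) * xmon x (γ + Pi.single i 1)
        + (q * (d * xmon x δ + x j * p₁) + l * xmon x γ') := by
      calc x i * xmon x γ = (x i * x j) * xmon x γ' := by rw [E1, mul_assoc]
        _ = (q * (x j * x i) + l) * xmon x γ' := by rw [E2]
        _ = q * (x j * (x i * xmon x γ')) + l * xmon x γ' := by noncomm_ring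
        _ = q * (x j * (c₁ * xmon x δ + p₁)) + l * xmon x γ' := by rw [E3]
        _ = q * ((x j * c₁) * xmon x δ + x j * p₁) + l * xmon x γ' := by noncomm_ring
        _ = q * ((c₂ * x j + d) * xmon x δ + x j * p₁) + l * xmon x γ' := by rw [E4]
        _ = q * (c₂ * (x j * xmon x δ) + (d * xmon x δ + x j * p₁)) + l * xmon x γ' := by
            noncomm_ring
        _ = q * (c₂ * xmon x (γ + Pi.single i 1) + (d * xmon x δ + x j * p₁))
            + l * xmon x γ' := by rw [E5]
        _ = _ := by noncomm_ring
    refine ⟨q * c₂, mul_mem hqS hc₂S, ?_, ?_⟩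
    · obtain ⟨v, hvS, hv⟩ := hqinv
      obtain ⟨w, hwS, hw⟩ := hc₂inv
      exact ⟨w * v, mul_mem hwS hvS, by rw [mul_assoc, ← mul_assoc v, hv, one_mul, hw]⟩
    · have h5 : x i * xmon x γ - (q * c₂) * xmon x (γ + Pi.single i 1)
          = q * (d * xmon x δ + x j * p₁) + l * xmon x γ' := by
        rw [main]; noncomm_ring
      rw [h5]
      apply Submodule.add_mem
      · have h6 : q * (d * xmon x δ + x j * p₁)
            = (⟨q, hqS⟩ : S) • (d * xmon x δ + x j * p₁) := rfl
        rw [h6]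
        apply Submodule.smul_mem
        apply Submodule.add_mem
        · have h7 : d * xmon x δ = (⟨d, hdS⟩ : S) • xmon x δ := rfl
          rw [h7]
          exact Submodule.smul_mem _ _ (xmon_mem_lowMon (by omega))
        · exact hC j m le_rfl p₁ hp₁
      · exact hL l hlmem

lemma x_mul_lowMon [Nontrivial A] (hA : IsSkewPBWExt S x) (j : Fin n) (N : ℕ) {a : A}
    (ha : a ∈ lowMon S x N) : x j * a ∈ lowMon S x (N + 1) := by
  induction ha using Submodule.span_induction with
  | mem a hamem =>
    obtain ⟨γ', hγ', rfl⟩ := hamem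
    simp only [Set.mem_setOf_eq] at hγ'
    obtain ⟨c, hcS, _, hlow⟩ := xi_mul_xmon hA (∑ k, γ' k) j γ' rfl
    have heq : x j * xmon x γ' = c * xmon x (γ' + Pi.single j 1)
        + (x j * xmon x γ' - c * xmon x (γ' + Pi.single j 1)) := by noncomm_ring
    rw [heq]
    apply Submodule.add_mem
    · have h2 : c * xmon x (γ' + Pi.single j 1)
          = (⟨c, hcS⟩ : S) • xmon x (γ' + Pi.single j 1) := rfl
      rw [h2]
      exact Submodule.smul_mem _ _ (xmon_mem_lowMon (by rw [sum_add_single]; omega))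
    · exact lowMon_mono (by omega) hlow
  | zero => rw [mul_zero]; exact Submodule.zero_mem _
  | add a b _ _ pa pb => rw [mul_add]; exact Submodule.add_mem _ pa pb
  | smul r a hmem pa =>
    by_cases hr0 : (r : A) = 0
    · have h0 : r • a = 0 := by rw [show r • a = (r : A) * a from rfl, hr0, zero_mul]
      rw [h0, mul_zero]; exact Submodule.zero_mem _
    · obtain ⟨c, hcS, _, hd⟩ := hA.comm_coeff j r r.2 hr0
      have heq : x j * (r • a) = c * (x j * a) + (x j * (r : A) - c * x j) * a := by
        show x j * ((r : A) * a) = _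
        noncomm_ring
      rw [heq]
      apply Submodule.add_mem
      · exact (show c * (x j * a) = (⟨c, hcS⟩ : S) • (x j * a) from rfl) ▸
          Submodule.smul_mem _ _ pa
      · have h3 : (x j * (r : A) - c * x j) * a = (⟨_, hd⟩ : S) • a := rfl
        rw [h3]
        exact Submodule.smul_mem _ _ (lowMon_mono (by omega) hmem)

lemma xmon_mul_xmon [Nontrivial A] (hA : IsSkewPBWExt S x) (m : ℕ) :
    ∀ (α β : Fin n → ℕ), (∑ k, α k) = m →
    ∃ c : A, c ∈ S ∧ (∃ v ∈ S, v * c = 1) ∧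
      xmon x α * xmon x β - c * xmon x (α + β) ∈ lowMon S x (∑ k, (α k + β k)) := by
  induction m using Nat.strong_induction_on with
  | _ m IH =>
  intro α β hα
  by_cases hα0 : α = 0
  · subst hα0
    refine ⟨1, one_mem S, ⟨1, one_mem S, one_mul 1⟩, ?_⟩
    rw [xmon_zero, one_mul, one_mul, zero_add, sub_self]
    exact Submodule.zero_mem _
  · have hex : ∃ k, α k ≠ 0 := by
      by_contra hc
      push_neg at hc
      exact hα0 (funext fun k => hc k)
    obtain ⟨k₀, hk₀⟩ := hex
    set T : Finset (Fin n) := Finset.univ.filter (fun k => α k ≠ 0) with hT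
    have hTne : T.Nonempty := ⟨k₀, by simp [hT, hk₀]⟩
    set j := T.min' hTne with hjdef
    have hjmin : ∀ k, k < j → α k = 0 := by
      intro k hk
      by_contra hne
      exact absurd (T.min'_le k (by simp [hT, hne])) (not_le.2 hk)
    have hjmem : α j ≠ 0 := by
      have := T.min'_mem hTne
      simp only [hT, Finset.mem_filter, Finset.mem_univ, true_and] at this
      exact this
    set α' : Fin n → ℕ := Function.update α j (α j - 1) with hα'def
    have hαdecomp : α = α' + Pi.single j 1 := by
      funext k
      by_cases hkj : k = j
      · subst hkj
        simp only [hα'def, Pi.add_apply, Function.update_self, Pi.single_eq_same]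
        omega
      · simp [hα'def, Function.update_of_ne hkj, Pi.single_eq_of_ne hkj]
    have hα'pre : ∀ k, k < j → α' k = 0 := by
      intro k hk
      rw [hα'def, Function.update_of_ne (ne_of_lt hk)]
      exact hjmin k hk
    have hsum' : (∑ k, α' k) + 1 = m := by
      rw [← sum_add_single α' j, ← hαdecomp]; exact hα
    have hm1 : (∑ k, α' k) < m := by omega
    have E1 : xmon x α = x j * xmon x α' := by
      rw [xmon_factor x j α' hα'pre, ← hαdecomp]
    have hsumab : (∑ k, (α k + β k)) = (∑ k, (α' k + β k)) + 1 := by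
      rw [Finset.sum_add_distrib, Finset.sum_add_distrib]
      omega
    obtain ⟨c₁, hc₁S, hc₁inv, E3low⟩ := IH _ hm1 α' β rfl
    set p₁ : A := xmon x α' * xmon x β - c₁ * xmon x (α' + β) with hp₁def
    have E3 : xmon x α' * xmon x β = c₁ * xmon x (α' + β) + p₁ := by
      rw [hp₁def]; noncomm_ring
    obtain ⟨c₂, d, hc₂S, hdS, hc₂inv, E4⟩ := sigma_left_inv hA j hc₁S hc₁inv
    have hsumab' : (∑ k, (α' + β : Fin n → ℕ) k) = (∑ k, (α' k + β k)) := rfl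
    obtain ⟨c₃, hc₃S, hc₃inv, E5low⟩ := xi_mul_xmon hA (∑ k, (α' + β : Fin n → ℕ) k) j (α' + β) rfl
    set p₃ : A := x j * xmon x (α' + β) - c₃ * xmon x ((α' + β) + Pi.single j 1) with hp₃def
    have habj : (α' + β) + Pi.single j 1 = α + β := by
      rw [hαdecomp, add_right_comm]
    have E5 : x j * xmon x (α' + β) = c₃ * xmon x (α + β) + p₃ := by
      rw [hp₃def, habj]; noncomm_ring
    have hp₃ : p₃ ∈ lowMon S x (∑ k, (α k + β k)) := by
      have : (∑ k, (α' + β : Fin n → ℕ) k) + 1 = (∑ k, (α k + β k)) := by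
        rw [hsumab']
        omega
      rw [← habj, ← this] at *
      exact E5low
    have hp₁mem : p₁ ∈ lowMon S x (∑ k, (α' k + β k)) := E3low
    have hxjp₁ : x j * p₁ ∈ lowMon S x (∑ k, (α k + β k)) := by
      rw [hsumab]
      exact x_mul_lowMon hA j _ hp₁mem
    have main : xmon x α * xmon x β = (c₂ * c₃) * xmon x (α + β)
        + (c₂ * p₃ + (d * xmon x (α' + β) + x j * p₁)) := by
      calc xmon x α * xmon x β = x j * (xmon x α' * xmon x β) := by rw [E1, mul_assoc]
        _ = x j * (c₁ * xmon x (α' + β) + p₁) := by rw [E3]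
        _ = (x j * c₁) * xmon x (α' + β) + x j * p₁ := by noncomm_ring
        _ = (c₂ * x j + d) * xmon x (α' + β) + x j * p₁ := by rw [E4]
        _ = c₂ * (x j * xmon x (α' + β)) + (d * xmon x (α' + β) + x j * p₁) := by noncomm_ring
        _ = c₂ * (c₃ * xmon x (α + β) + p₃) + (d * xmon x (α' + β) + x j * p₁) := by rw [E5]
        _ = _ := by noncomm_ring
    refine ⟨c₂ * c₃, mul_mem hc₂S hc₃S, ?_, ?_⟩
    · obtain ⟨v, hvS, hv⟩ := hc₂inv
      obtain ⟨w, hwS, hw⟩ := hc₃inv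
      exact ⟨w * v, mul_mem hwS hvS, by rw [mul_assoc, ← mul_assoc v, hv, one_mul, hw]⟩
    · have h5 : xmon x α * xmon x β - (c₂ * c₃) * xmon x (α + β)
          = c₂ * p₃ + (d * xmon x (α' + β) + x j * p₁) := by
        rw [main]; noncomm_ring
      rw [h5]
      apply Submodule.add_mem
      · have h6 : c₂ * p₃ = (⟨c₂, hc₂S⟩ : S) • p₃ := rfl
        rw [h6]
        exact Submodule.smul_mem _ _ hp₃
      · apply Submodule.add_mem
        · have h7 : d * xmon x (α' + β) = (⟨d, hdS⟩ : S) • xmon x (α' + β) := rfl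
          rw [h7]
          exact Submodule.smul_mem _ _ (xmon_mem_lowMon (by rw [hsumab']; omega))
        · exact hxjp₁

end SkewPBW

/-- For all `α, β ∈ ℕⁿ` there exist unique elements `c_{α,β} ∈ R` and `p_{α,β} ∈ A` such that
`x^α x^β = c_{α,β} x^{α+β} + p_{α,β}`, where `c_{α,β}` is left invertible and `p_{α,β} = 0` or
`deg p_{α,β} < |α+β|`. -/
theorem skewPBW_monomial_product {A : Type} [Ring A] {n : ℕ}
    (S : Subring A) (x : Fin n → A) (hA : IsSkewPBWExt S x) (α β : Fin n → ℕ) :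
    ∃! cp : S × A, (∃ u : S, u * cp.1 = 1) ∧ cp.2 ∈ lowMon S x (∑ i, (α i + β i)) ∧
      xmon x α * xmon x β = (cp.1 : A) * xmon x (α + β) + cp.2 := by
  rcases subsingleton_or_nontrivial A with hsub | hnt
  · haveI : Subsingleton S := ⟨fun a b => Subtype.ext (Subsingleton.elim _ _)⟩
    refine ⟨(1, 0), ⟨⟨1, Subsingleton.elim _ _⟩, Submodule.zero_mem _, Subsingleton.elim _ _⟩,
      fun y _ => ?_⟩
    exact Prod.ext (Subsingleton.elim _ _) (Subsingleton.elim _ _)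
  · obtain ⟨c, hcS, ⟨v, hvS, hvc⟩, hlow⟩ := SkewPBW.xmon_mul_xmon hA (∑ k, α k) α β rfl
    have hspanle : lowMon S x (∑ i, (α i + β i)) ≤
        Submodule.span S (xmon x '' (Set.univ \ {α + β})) := by
      apply Submodule.span_mono
      apply Set.image_mono
      intro γ hγ
      simp only [Set.mem_setOf_eq] at hγ
      refine ⟨trivial, ?_⟩
      intro hc2
      rw [Set.mem_singleton_iff] at hc2
      subst hc2
      exact absurd rfl (ne_of_lt hγ)
    refine ⟨(⟨c, hcS⟩, xmon x α * xmon x β - c * xmon x (α + β)),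
      ⟨⟨⟨v, hvS⟩, Subtype.ext hvc⟩, hlow, by noncomm_ring⟩, ?_⟩
    rintro ⟨c', p'⟩ ⟨_, hp'low, heq'⟩
    simp only at heq' hp'low ⊢
    have hkey : ((c' - ⟨c, hcS⟩ : S)) • xmon x (α + β)
        = (xmon x α * xmon x β - c * xmon x (α + β)) - p' := by
      show ((c' : A) - c) * xmon x (α + β) = _
      rw [heq']
      noncomm_ring
    have hmem : ((c' - ⟨c, hcS⟩ : S)) • xmon x (α + β) ∈
        Submodule.span S (xmon x '' (Set.univ \ {α + β})) := by
      rw [hkey]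
      exact Submodule.sub_mem _ (hspanle hlow) (hspanle hp'low)
    have hzero := linearIndependent_iff_eq_zero_of_smul_mem_span.mp hA.linearIndependent
      (α + β) _ hmem
    have hc' : c' = ⟨c, hcS⟩ := by rwa [sub_eq_zero] at hzero
    have hcc : (c' : A) = c := congrArg Subtype.val hc'
    have hp : p' = xmon x α * xmon x β - c * xmon x (α + β) := by
      rw [heq', hcc]
      noncomm_ring
    exact Prod.ext hc' hp
end

section
/- Let R, I = {1,…,n}, X, σᵢ, δᵢ, c_{ij}, d_{ij}, a_{ij}^{(k)}, p, q, h be as in the reduction machinery, and assume conditions (1)–(3) hold: each σᵢ is a ring endomorphism of R, each δᵢ is a σᵢ-derivation, h(x_j xᵢ r) = h(p(x_j xᵢ) r) for i < j and r ∈ R, and h(x_k x_j xᵢ) = h(p(x_k x_j) xᵢ) for i < j < k. Then for all words a, b ∈ W and all r, s ∈ R: (i) h(a0b) = 0; (ii) h(a(−r)b) = −h(arb); (iii) h(a(r+s)b) = h(arb + asb); (iv) h(a1b) = h(ab); (v) h(a(rs)b) = h(arsb), where on the left-hand sides of (v) the letter is the single R-letter for the product rs, and on the right-hand side r and s appear as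 two consecutive R-letters. -/
/-! ## The reduction machinery -/

/-- A letter is either a variable `xᵢ` (`Sum.inl i`) or an element of `R` (`Sum.inr r`). -/
abbrev Ltr (R : Type) (n : ℕ) := Sum (Fin n) R

/-- `W` is the free monoid on the alphabet `X ∪ R`. -/
abbrev W (R : Type) (n : ℕ) := FreeMonoid (Ltr R n)

/-- The free `ℤ`-algebra `ℤ⟨X ∪ R⟩` on the alphabet `X ∪ R`. -/
abbrev FreeAlg (R : Type) (n : ℕ) := MonoidAlgebra ℤ (W R n)

variable {R : Type} [Ring R] {n : ℕ}

/-- The letter `xᵢ` as a word. -/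
def xLtr (i : Fin n) : W R n := FreeMonoid.of (Sum.inl i)

/-- The letter `r ∈ R` as a word. -/
def rLtr (r : R) : W R n := FreeMonoid.of (Sum.inr r)

/-- A word of `W`, viewed inside `ℤ⟨X ∪ R⟩`. -/
noncomputable def wd (w : W R n) : FreeAlg R n := MonoidAlgebra.of ℤ (W R n) w

/-- The number of inversions of a word involving only `x`'s. -/
def invX : List (Ltr R n) → ℕ
  | [] => 0
  | (Sum.inl j) :: rest =>
      (rest.countP (fun l => match l with | Sum.inl i => decide (i < j) | _ => false)) + invX rest
  | (Sum.inr _) :: rest => invX rest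

/-- The number of inversions of a word of the type `(xᵢ, r)`. -/
def invXR : List (Ltr R n) → ℕ
  | [] => 0
  | (Sum.inl _) :: rest =>
      (rest.countP (fun l => match l with | Sum.inr _ => true | _ => false)) + invXR rest
  | (Sum.inr _) :: rest => invXR rest

/-- `T` is the set of words with complexity `(a, 0, 0)`. -/
def MemT (w : W R n) : Prop := invX (FreeMonoid.toList w) = 0 ∧ invXR (FreeMonoid.toList w) = 0

/-- The list of `X`-letters of a word, in order. -/
def xPart (w : W R n) : List (Fin n) :=
  (FreeMonoid.toList w).filterMap (fun l => match l with | Sum.inl i => some i | _ => none)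

/-- The ordered product of the `R`-letters of a word. -/
def rPart (w : W R n) : R :=
  ((FreeMonoid.toList w).filterMap (fun l => match l with | Sum.inr r => some r | _ => none)).prod

/-- `Mon` is the set of standard monomials `x_{i₁} ⋯ x_{i_m}`, `i₁ ≤ ⋯ ≤ i_m`. -/
def Mon (n : ℕ) := {l : List (Fin n) // l.Pairwise (· ≤ ·)}

/-- `F_R(Mon)`, the free left `R`-module with basis `Mon`. -/
abbrev FRMon (R : Type) [Ring R] (n : ℕ) := Mon n →₀ R

open scoped Classical in
/-- The value of `q` on a word: `q(r₁ ⋯ r_m x_{i₁} ⋯ x_{i_k}) = (r₁ ⋯ r_m) • x_{i₁} ⋯ x_{i_k}`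
(for words in `T`; the value on other words is irrelevant). -/
noncomputable def qWord (w : W R n) : FRMon R n :=
  if h : (xPart w).Pairwise (· ≤ ·) then Finsupp.single ⟨xPart w, h⟩ (rPart w) else 0

/-- `t : F_R(Mon) → ℤ⟨X ∪ R⟩`, sending `Σ r_x̄ • x̄` to `Σ (r_x̄ x̄)` (the word consisting of the
`R`-letter `r_x̄` followed by the monomial `x̄`). -/
noncomputable def tmap (f : FRMon R n) : FreeAlg R n :=
  f.sum (fun m r => wd (FreeMonoid.ofList (Sum.inr r :: m.val.map Sum.inl)))

/-- The defining recursion (by induction on complexity) of the reduction map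
`p : W → ℤ⟨X ∪ R⟩` associated with the data `σᵢ, δᵢ, c_{ij}, d_{ij}, a_{ij}^{(k)}`. -/
structure IsReduction (σ δ : Fin n → R → R) (c d : Fin n → Fin n → R)
    (a : Fin n → Fin n → Fin n → R) (P : W R n → FreeAlg R n) : Prop where
  of_memT : ∀ w : W R n, MemT w → P w = wd w
  xr : ∀ (v₁ v₂ : W R n) (i : Fin n) (r : R), MemT (rLtr r * v₂) →
    P (v₁ * xLtr i * rLtr r * v₂) =
      P (v₁ * rLtr (σ i r) * xLtr i * v₂) + P (v₁ * rLtr (δ i r) * v₂)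
  xx : ∀ (v₁ v₂ : W R n) (i j : Fin n), i < j → MemT (xLtr i * v₂) →
    P (v₁ * xLtr j * xLtr i * v₂) =
      P (v₁ * rLtr (c i j) * xLtr i * xLtr j * v₂) +
      (∑ k, P (v₁ * rLtr (a i j k) * xLtr k * v₂)) + P (v₁ * rLtr (d i j) * v₂)

/-- Condition (1): each `σᵢ` is a ring endomorphism of `R` and each `δᵢ` is a
`σᵢ`-derivation. -/
def Cond1 (σ δ : Fin n → R → R) : Prop :=
  ∀ i : Fin n, σ i 1 = 1 ∧ (∀ r s, σ i (r + s) = σ i r + σ i s) ∧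
    (∀ r s, σ i (r * s) = σ i r * σ i s) ∧
    (∀ r s, δ i (r + s) = δ i r + δ i s) ∧
    (∀ r s, δ i (r * s) = σ i r * δ i s + δ i r * s)

/-! ## Auxiliary machinery for the proof -/

set_option linter.unusedSectionVars false
set_option maxHeartbeats 1000000

section DiamondAux

open List

variable {R : Type} [Ring R] {n : ℕ}

/-- `MemT` in terms of lists. -/
def MemTL (l : List (Ltr R n)) : Prop := invX l = 0 ∧ invXR l = 0

lemma memT_ofList (l : List (Ltr R n)) : MemT (FreeMonoid.ofList l) ↔ MemTL l := Iff.rfl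

lemma fm_eq {a b : W R n} (h : FreeMonoid.toList a = FreeMonoid.toList b) : a = b := by
  have := congrArg FreeMonoid.ofList h
  simpa using this

/-- number of `X`-letters -/
def nXc (l : List (Ltr R n)) : ℕ := l.countP (fun x => x.isLeft)
/-- number of `R`-letters -/
def nRc (l : List (Ltr R n)) : ℕ := l.countP (fun x => x.isRight)
/-- list of `X`-letters -/
def xlst (l : List (Ltr R n)) : List (Fin n) := xPart (FreeMonoid.ofList l)
/-- product of `R`-letters -/
def rlst (l : List (Ltr R n)) : R := rPart (FreeMonoid.ofList l)

lemma xlst_def (l : List (Ltr R n)) :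
    xlst l = l.filterMap (fun x => match x with | Sum.inl i => some i | _ => none) := rfl

lemma rlst_def (l : List (Ltr R n)) :
    rlst l = (l.filterMap (fun x => match x with | Sum.inr r => some r | _ => none)).prod := rfl

lemma nXc_append (A B : List (Ltr R n)) : nXc (A ++ B) = nXc A + nXc B :=
  List.countP_append

lemma nRc_append (A B : List (Ltr R n)) : nRc (A ++ B) = nRc A + nRc B :=
  List.countP_append

lemma xlst_append (A B : List (Ltr R n)) : xlst (A ++ B) = xlst A ++ xlst B := by
  simp [xlst_def, List.filterMap_append]

lemma rlst_append (A B : List (Ltr R n)) : rlst (A ++ B) = rlst A * rlst B := by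
  simp [rlst_def, List.filterMap_append]

@[simp] lemma xlst_nil : xlst ([] : List (Ltr R n)) = [] := rfl
@[simp] lemma rlst_nil : rlst ([] : List (Ltr R n)) = 1 := rfl
@[simp] lemma xlst_cons_inr (r : R) (l : List (Ltr R n)) :
    xlst (Sum.inr r :: l) = xlst l := rfl
@[simp] lemma xlst_cons_inl (i : Fin n) (l : List (Ltr R n)) :
    xlst (Sum.inl i :: l) = i :: xlst l := rfl
@[simp] lemma rlst_cons_inr (r : R) (l : List (Ltr R n)) :
    rlst (Sum.inr r :: l) = r * rlst l := by simp [rlst_def]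
@[simp] lemma rlst_cons_inl (i : Fin n) (l : List (Ltr R n)) :
    rlst (Sum.inl i :: l) = rlst l := rfl

/-- inversions of a list of indices -/
def inv2 : List (Fin n) → ℕ
  | [] => 0
  | j :: A => A.countP (fun i => decide (i < j)) + inv2 A

lemma inv2_cons (j : Fin n) (A : List (Fin n)) :
    inv2 (j :: A) = A.countP (fun i => decide (i < j)) + inv2 A := rfl

/-- cross inversions -/
def cXc (A B : List (Fin n)) : ℕ := (A.map fun j => B.countP (fun i => decide (i < j))).sum

lemma countP_lt_eq (A : List (Ltr R n)) (j : Fin n) :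
    A.countP (fun l => match l with | Sum.inl i => decide (i < j) | _ => false)
      = (xlst A).countP (fun i => decide (i < j)) := by
  induction A with
  | nil => rfl
  | cons x t ih =>
    cases x <;> simp [List.countP_cons, ih]

lemma countP_isr_eq (A : List (Ltr R n)) :
    A.countP (fun l => match l with | Sum.inr _ => true | _ => false) = nRc A := by
  induction A with
  | nil => rfl
  | cons x t ih =>
    cases x <;> simp [nRc, List.countP_cons, ih] <;> simp [nRc] at ih <;> omega

lemma invX_eq (l : List (Ltr R n)) : invX l = inv2 (xlst l) := by
  induction l with
  | nil => rfl
  | cons x t ih =>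
    cases x with
    | inl j =>
      have h1 : invX (Sum.inl j :: t)
          = t.countP (fun l => match l with | Sum.inl i => decide (i < j) | _ => false)
            + invX t := rfl
      rw [h1, countP_lt_eq t j, ih, xlst_cons_inl, inv2_cons]
    | inr r => simpa [invX] using ih

lemma invXR_cons_inl (j : Fin n) (t : List (Ltr R n)) :
    invXR (Sum.inl j :: t) = nRc t + invXR t := by
  simp [invXR, countP_isr_eq]

lemma invXR_cons_inr (r : R) (t : List (Ltr R n)) :
    invXR (Sum.inr r :: t) = invXR t := rfl

lemma invXR_append (A B : List (Ltr R n)) :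
    invXR (A ++ B) = invXR A + nXc A * nRc B + invXR B := by
  induction A with
  | nil => simp [invXR, nXc]
  | cons x t ih =>
    cases x with
    | inl j =>
      rw [List.cons_append, invXR_cons_inl, invXR_cons_inl, nRc_append, ih]
      simp [nXc, List.countP_cons]
      ring
    | inr r =>
      rw [List.cons_append, invXR_cons_inr, invXR_cons_inr, ih]
      simp [nXc, List.countP_cons]

lemma sum_map_add {α : Type*} (A : List α) (f g : α → ℕ) :
    (A.map fun x => f x + g x).sum = (A.map f).sum + (A.map g).sum := by
  induction A with
  | nil => rfl
  | cons x t ih => simp [ih]; omega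

lemma cXc_append_left (A A' B : List (Fin n)) :
    cXc (A ++ A') B = cXc A B + cXc A' B := by
  simp [cXc]

lemma cXc_append_right (A B B' : List (Fin n)) :
    cXc A (B ++ B') = cXc A B + cXc A B' := by
  simp only [cXc, List.countP_append]
  exact sum_map_add A _ _

lemma cXc_cons (j : Fin n) (A B : List (Fin n)) :
    cXc (j :: A) B = B.countP (fun i => decide (i < j)) + cXc A B := by
  simp [cXc]

lemma inv2_append (A B : List (Fin n)) :
    inv2 (A ++ B) = inv2 A + cXc A B + inv2 B := by
  induction A with
  | nil => simp [inv2, cXc]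
  | cons j t ih =>
    rw [List.cons_append, inv2_cons, inv2_cons, List.countP_append, ih, cXc_cons]
    ring

end DiamondAux
section DiamondAuxB

open List

variable {R : Type} [Ring R] {n : ℕ}

/-- a list of letters consisting only of `R`-letters -/
def RZ (z : List (Ltr R n)) : Prop := ∀ x ∈ z, x.isRight = true

lemma rz_nil : RZ ([] : List (Ltr R n)) := by intro x hx; cases hx
lemma rz_single (r : R) : RZ (n := n) [Sum.inr r] := by intro x hx; simp at hx; subst hx; rfl
lemma rz_pair (r s : R) : RZ (n := n) [Sum.inr r, Sum.inr s] := by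
  intro x hx; simp at hx; rcases hx with h | h <;> subst h <;> rfl

lemma xlst_rz {z : List (Ltr R n)} (hz : RZ z) : xlst z = [] := by
  induction z with
  | nil => rfl
  | cons x t ih =>
    cases x with
    | inl i => exact absurd (hz _ (List.mem_cons_self)) (by simp)
    | inr r => exact ih fun y hy => hz y (List.mem_cons_of_mem _ hy)

lemma nXc_rz {z : List (Ltr R n)} (hz : RZ z) : nXc z = 0 := by
  simp only [nXc, List.countP_eq_zero]
  intro x hx
  have := hz x hx
  cases x <;> simp_all

lemma invXR_rz {z : List (Ltr R n)} (hz : RZ z) : invXR z = 0 := by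
  induction z with
  | nil => rfl
  | cons x t ih =>
    cases x with
    | inl i => exact absurd (hz _ (List.mem_cons_self)) (by simp)
    | inr r => exact (invXR_cons_inr r t).trans (ih fun y hy => hz y (List.mem_cons_of_mem _ hy))

lemma invX_rz {z : List (Ltr R n)} (hz : RZ z) : invX z = 0 := by
  rw [invX_eq, xlst_rz hz]; rfl

@[simp] lemma nXc_cons_inl (i : Fin n) (t : List (Ltr R n)) : nXc (Sum.inl i :: t) = nXc t + 1 := by
  simp [nXc, List.countP_cons]
@[simp] lemma nXc_cons_inr (r : R) (t : List (Ltr R n)) : nXc (Sum.inr r :: t) = nXc t := by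
  simp [nXc, List.countP_cons]
@[simp] lemma nXc_nil : nXc ([] : List (Ltr R n)) = 0 := rfl
@[simp] lemma nRc_cons_inl (i : Fin n) (t : List (Ltr R n)) : nRc (Sum.inl i :: t) = nRc t := by
  simp [nRc, List.countP_cons]
@[simp] lemma nRc_cons_inr (r : R) (t : List (Ltr R n)) : nRc (Sum.inr r :: t) = nRc t + 1 := by
  simp [nRc, List.countP_cons]
@[simp] lemma nRc_nil : nRc ([] : List (Ltr R n)) = 0 := rfl
@[simp] lemma invXR_nil : invXR ([] : List (Ltr R n)) = 0 := rfl
@[simp] lemma inv2_nil : inv2 ([] : List (Fin n)) = 0 := rfl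

/-- membership in `T` of a word with an `R`-letter inserted: the key replacement lemma. -/
lemma memTL_replace {A B : List (Ltr R n)} {t : R}
    (h : MemTL (A ++ Sum.inr t :: B)) {z : List (Ltr R n)} (hz : RZ z) :
    MemTL (A ++ z ++ B) := by
  obtain ⟨h1, h2⟩ := h
  rw [invX_eq, xlst_append] at h1
  simp only [xlst_cons_inr] at h1
  rw [invXR_append, invXR_cons_inr, nRc_cons_inr] at h2
  constructor
  · rw [invX_eq, xlst_append, xlst_append, xlst_rz hz, List.append_nil]
    exact h1
  · rw [invXR_append, invXR_append, invXR_rz hz, nXc_append, nXc_rz hz]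
    generalize hX : nXc A * (nRc B + 1) = X at h2
    have hXA : invXR A = 0 ∧ X = 0 ∧ invXR B = 0 := by omega
    have hA : nXc A = 0 := by
      rcases Nat.mul_eq_zero.mp (hX.trans hXA.2.1) with h | h
      · exact h
      · omega
    simp [hA, hXA.1, hXA.2.2]

lemma memTL_cons_inr {r : R} {l : List (Ltr R n)} (h : MemTL l) : MemTL (Sum.inr r :: l) := h

/-- complexity -/
def cplxL (l : List (Ltr R n)) : ℕ × ℕ × ℕ := (nXc l, invX l, invXR l)

/-- lexicographic order on complexities -/
def CLt : (ℕ × ℕ × ℕ) → (ℕ × ℕ × ℕ) → Prop :=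
  Prod.Lex (· < ·) (Prod.Lex (· < ·) (· < ·))

lemma clt_wf : WellFounded (@CLt) :=
  WellFounded.prod_lex (Nat.lt_wfRel.wf) (WellFounded.prod_lex Nat.lt_wfRel.wf Nat.lt_wfRel.wf)

lemma clt_intro {x y : ℕ × ℕ × ℕ}
    (h : x.1 < y.1 ∨ (x.1 = y.1 ∧ (x.2.1 < y.2.1 ∨ (x.2.1 = y.2.1 ∧ x.2.2 < y.2.2)))) :
    CLt x y := by
  obtain ⟨a, b, cc⟩ := x
  obtain ⟨a', b', cc'⟩ := y
  rcases h with h | ⟨h1, h | ⟨h2, h3⟩⟩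
  · exact Prod.Lex.left _ _ h
  · cases h1; exact Prod.Lex.right _ (Prod.Lex.left _ _ h)
  · cases h1; cases h2; exact Prod.Lex.right _ (Prod.Lex.right _ h3)

/-- dropping `x`-letters decreases complexity -/
lemma clt_drop (p s m m' : List (Ltr R n)) (h : nXc m' < nXc m) :
    CLt (cplxL (p ++ m' ++ s)) (cplxL (p ++ m ++ s)) := by
  apply clt_intro
  left
  simp only [cplxL, nXc_append]
  omega

/-- the `x_i r → σ r x_i` move decreases complexity -/
lemma clt_xr (p s : List (Ltr R n)) (i : Fin n) (r t : R) :
    CLt (cplxL (p ++ Sum.inr t :: Sum.inl i :: s)) (cplxL (p ++ Sum.inl i :: Sum.inr r :: s)) := by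
  apply clt_intro
  right
  have e1 : (Sum.inr t :: Sum.inl i :: s : List (Ltr R n))
      = [Sum.inr t, Sum.inl i] ++ s := rfl
  have e2 : (Sum.inl i :: Sum.inr r :: s : List (Ltr R n))
      = [Sum.inl i, Sum.inr r] ++ s := rfl
  rw [e1, e2, ← List.append_assoc, ← List.append_assoc]
  refine ⟨?_, Or.inr ⟨?_, ?_⟩⟩
  · simp [cplxL, nXc_append]
  · simp only [cplxL, invX_eq, xlst_append]
    rfl
  · simp only [cplxL, invXR_append, nXc_append, nRc_append]
    have h1 : invXR ([Sum.inr t, Sum.inl i] : List (Ltr R n)) = 0 := by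
      rw [invXR_cons_inr, invXR_cons_inl]; simp
    have h2 : invXR ([Sum.inl i, Sum.inr r] : List (Ltr R n)) = 1 := by
      rw [invXR_cons_inl, invXR_cons_inr]; simp
    have v1 : nXc ([Sum.inr t, Sum.inl i] : List (Ltr R n)) = 1 := by simp
    have v2 : nXc ([Sum.inl i, Sum.inr r] : List (Ltr R n)) = 1 := by simp
    have v3 : nRc ([Sum.inr t, Sum.inl i] : List (Ltr R n)) = 1 := by simp
    have v4 : nRc ([Sum.inl i, Sum.inr r] : List (Ltr R n)) = 1 := by simp
    rw [h1, h2, v1, v2, v3, v4]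
    omega

/-- the `x_j x_i → c x_i x_j` move decreases complexity -/
lemma clt_xx (p s : List (Ltr R n)) (i j : Fin n) (hij : i < j) (t : R) :
    CLt (cplxL (p ++ Sum.inr t :: Sum.inl i :: Sum.inl j :: s))
      (cplxL (p ++ Sum.inl j :: Sum.inl i :: s)) := by
  apply clt_intro
  right
  have e1 : (Sum.inr t :: Sum.inl i :: Sum.inl j :: s : List (Ltr R n))
      = [Sum.inr t, Sum.inl i, Sum.inl j] ++ s := rfl
  have e2 : (Sum.inl j :: Sum.inl i :: s : List (Ltr R n))
      = [Sum.inl j, Sum.inl i] ++ s := rfl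
  rw [e1, e2, ← List.append_assoc, ← List.append_assoc]
  refine ⟨?_, Or.inl ?_⟩
  · simp [cplxL, nXc_append]
  · simp only [cplxL, invX_eq, xlst_append]
    have x1 : xlst ([Sum.inr t, Sum.inl i, Sum.inl j] : List (Ltr R n)) = [i, j] := rfl
    have x2 : xlst ([Sum.inl j, Sum.inl i] : List (Ltr R n)) = [j, i] := rfl
    rw [x1, x2]
    simp only [inv2_append, cXc_append_left]
    have hni : ¬ (j < i) := lt_asymm hij
    have i1 : inv2 [i, j] = 0 := by
      simp [inv2_cons, List.countP_cons, hni]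
    have i2 : inv2 [j, i] = 1 := by
      simp [inv2_cons, List.countP_cons, hij]
    have c1 : cXc (xlst p) [i, j] = cXc (xlst p) [j, i] := by
      rw [show ([i,j] : List (Fin n)) = [i] ++ [j] from rfl,
        show ([j,i] : List (Fin n)) = [j] ++ [i] from rfl,
        cXc_append_right, cXc_append_right]
      omega
    have c2 : cXc [i, j] (xlst s) = cXc [j, i] (xlst s) := by
      simp [cXc]
      omega
    rw [c1, c2, i1, i2]
    omega

end DiamondAuxB
section DiamondAuxC

open List

variable {R : Type} [Ring R] {n : ℕ}

lemma memTL_nil : MemTL ([] : List (Ltr R n)) := ⟨rfl, rfl⟩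

lemma invX_cons_inl (j : Fin n) (t : List (Ltr R n)) :
    invX (Sum.inl j :: t) = (xlst t).countP (fun i => decide (i < j)) + invX t := by
  have h1 : invX (Sum.inl j :: t)
      = t.countP (fun l => match l with | Sum.inl i => decide (i < j) | _ => false)
        + invX t := rfl
  rw [h1, countP_lt_eq t j]

lemma invX_cons_inr (r : R) (t : List (Ltr R n)) : invX (Sum.inr r :: t) = invX t := rfl

/-- any word is either reduced or contains a reducible spot -/
lemma decompT (l : List (Ltr R n)) :
    MemTL l ∨
    (∃ p i r s, l = p ++ Sum.inl i :: Sum.inr r :: s ∧ MemTL (Sum.inr r :: s)) ∨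
    (∃ p i j s, i < j ∧ l = p ++ Sum.inl j :: Sum.inl i :: s ∧ MemTL (Sum.inl i :: s)) := by
  induction l with
  | nil => exact Or.inl memTL_nil
  | cons x t ih =>
    rcases ih with hT | ⟨p, i, r, s, heq, hm⟩ | ⟨p, i, j, s, hij, heq, hm⟩
    · cases x with
      | inr r =>
        left
        exact ⟨(invX_cons_inr r t).trans hT.1, (invXR_cons_inr r t).trans hT.2⟩
      | inl jj =>
        match t, hT with
        | [], _ =>
          left
          constructor
          · rw [invX_cons_inl]; rfl
          · rw [invXR_cons_inl]; rfl
        | Sum.inr r :: s, hT =>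
          exact Or.inr (Or.inl ⟨[], jj, r, s, rfl, hT⟩)
        | Sum.inl i :: s, hT =>
          by_cases hij : i < jj
          · exact Or.inr (Or.inr ⟨[], i, jj, s, hij, rfl, hT⟩)
          · left
            have hnr : nRc s = 0 := by
              have := hT.2
              rw [invXR_cons_inl] at this
              omega
            have hx : invX (Sum.inl i :: s) = 0 := hT.1
            rw [invX_cons_inl] at hx
            constructor
            · rw [invX_cons_inl, xlst_cons_inl]
              have hcnt : (i :: xlst s).countP (fun k => decide (k < jj)) = 0 := by
                rw [List.countP_cons]
                have h0 : (xlst s).countP (fun k => decide (k < jj)) = 0 := by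
                  have hmono : (xlst s).countP (fun k => decide (k < jj))
                      ≤ (xlst s).countP (fun k => decide (k < i)) := by
                    apply List.countP_mono_left
                    intro x _ hx'
                    simp only [decide_eq_true_eq] at hx' ⊢
                    exact lt_of_lt_of_le hx' (not_lt.mp hij)
                  omega
                simp [h0, hij]
              rw [hcnt, hT.1]
            · rw [invXR_cons_inl]
              have h2 := hT.2
              simp [nRc, List.countP_cons, hnr]
              constructor
              · simpa [nRc] using hnr
              · exact h2
    · exact Or.inr (Or.inl ⟨x :: p, i, r, s, by rw [heq]; rfl, hm⟩)
    · exact Or.inr (Or.inr ⟨x :: p, i, j, s, hij, by rw [heq]; rfl, hm⟩)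

/-- decomposition of a word with a hole: either reduced, or the hole is the
`r` of an `x_i r` spot, or there is a spot inside `u₂`, or a spot inside `u₁`. -/
lemma sdecomp (u₁ u₂ : List (Ltr R n)) :
    MemTL (u₁ ++ Sum.inr (0:R) :: u₂) ∨
    (∃ w₁ i, u₁ = w₁ ++ [Sum.inl i] ∧ MemTL (Sum.inr (0:R) :: u₂)) ∨
    (∃ w₁ i r' w₂, u₂ = w₁ ++ Sum.inl i :: Sum.inr r' :: w₂ ∧ MemTL (Sum.inr r' :: w₂)) ∨
    (∃ w₁ i j w₂, i < j ∧ u₂ = w₁ ++ Sum.inl j :: Sum.inl i :: w₂ ∧ MemTL (Sum.inl i :: w₂)) ∨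
    (∃ w₁ i r' w₂, u₁ = w₁ ++ Sum.inl i :: Sum.inr r' :: w₂ ∧
      MemTL (Sum.inr r' :: (w₂ ++ Sum.inr (0:R) :: u₂))) ∨
    (∃ w₁ i j w₂, i < j ∧ u₁ = w₁ ++ Sum.inl j :: Sum.inl i :: w₂ ∧
      MemTL (Sum.inl i :: (w₂ ++ Sum.inr (0:R) :: u₂))) := by
  induction u₁ with
  | nil =>
    rcases decompT u₂ with hT | ⟨p, i, r, s, heq, hm⟩ | ⟨p, i, j, s, hij, heq, hm⟩
    · exact Or.inl ⟨(invX_cons_inr 0 u₂).trans hT.1, (invXR_cons_inr 0 u₂).trans hT.2⟩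
    · exact Or.inr (Or.inr (Or.inl ⟨p, i, r, s, heq, hm⟩))
    · exact Or.inr (Or.inr (Or.inr (Or.inl ⟨p, i, j, s, hij, heq, hm⟩)))
  | cons x t ih =>
    rcases ih with hT | ⟨w₁, i, heq, hm⟩ | ⟨w₁, i, r', w₂, heq, hm⟩ |
      ⟨w₁, i, j, w₂, hij, heq, hm⟩ | ⟨w₁, i, r', w₂, heq, hm⟩ | ⟨w₁, i, j, w₂, hij, heq, hm⟩
    · -- the tail (with hole) is reduced
      cases x with
      | inr r =>
        exact Or.inl ⟨(invX_cons_inr r _).trans hT.1, (invXR_cons_inr r _).trans hT.2⟩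
      | inl jj =>
        match t, hT with
        | [], hT =>
          exact Or.inr (Or.inl ⟨[], jj, rfl, hT⟩)
        | Sum.inr r' :: v, hT =>
          exact Or.inr (Or.inr (Or.inr (Or.inr (Or.inl ⟨[], jj, r', v, rfl, hT⟩))))
        | Sum.inl ii :: v, hT =>
          exfalso
          have h2 := hT.2
          rw [show ((Sum.inl ii :: v : List (Ltr R n)) ++ Sum.inr (0:R) :: u₂)
              = Sum.inl ii :: (v ++ Sum.inr (0:R) :: u₂) from rfl, invXR_cons_inl,
            nRc_append, nRc_cons_inr] at h2
          omega
    · exact Or.inr (Or.inl ⟨x :: w₁, i, by rw [heq]; rfl, hm⟩)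
    · exact Or.inr (Or.inr (Or.inl ⟨w₁, i, r', w₂, heq, hm⟩))
    · exact Or.inr (Or.inr (Or.inr (Or.inl ⟨w₁, i, j, w₂, hij, heq, hm⟩)))
    · exact Or.inr (Or.inr (Or.inr (Or.inr (Or.inl ⟨x :: w₁, i, r', w₂, by rw [heq]; rfl, hm⟩))))
    · exact Or.inr (Or.inr (Or.inr (Or.inr (Or.inr ⟨x :: w₁, i, j, w₂, hij, by rw [heq]; rfl, hm⟩))))

end DiamondAuxC
section DiamondAuxD

open List

variable {R : Type} [Ring R] {n : ℕ}

/-- `h = Q ∘ Pbar ∘ wd ∘ ofList` on lists. -/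
noncomputable def hmv (Pbar : FreeAlg R n →ₗ[ℤ] FreeAlg R n) (Q : FreeAlg R n →ₗ[ℤ] FRMon R n)
    (l : List (Ltr R n)) : FRMon R n := Q (Pbar (wd (FreeMonoid.ofList l)))

lemma ofList_split_xr (p s : List (Ltr R n)) (i : Fin n) (r : R) :
    FreeMonoid.ofList (p ++ Sum.inl i :: Sum.inr r :: s)
      = FreeMonoid.ofList p * xLtr i * rLtr r * FreeMonoid.ofList s :=
  fm_eq (by simp [xLtr, rLtr])

lemma ofList_split_rx (p s : List (Ltr R n)) (i : Fin n) (t : R) :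
    FreeMonoid.ofList (p ++ Sum.inr t :: Sum.inl i :: s)
      = FreeMonoid.ofList p * rLtr t * xLtr i * FreeMonoid.ofList s :=
  fm_eq (by simp [xLtr, rLtr])

lemma ofList_split_r (p s : List (Ltr R n)) (t : R) :
    FreeMonoid.ofList (p ++ Sum.inr t :: s)
      = FreeMonoid.ofList p * rLtr t * FreeMonoid.ofList s :=
  fm_eq (by simp [rLtr])

lemma ofList_split_xx (p s : List (Ltr R n)) (i j : Fin n) :
    FreeMonoid.ofList (p ++ Sum.inl j :: Sum.inl i :: s)
      = FreeMonoid.ofList p * xLtr j * xLtr i * FreeMonoid.ofList s :=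
  fm_eq (by simp [xLtr])

lemma ofList_split_rxx (p s : List (Ltr R n)) (i j : Fin n) (t : R) :
    FreeMonoid.ofList (p ++ Sum.inr t :: Sum.inl i :: Sum.inl j :: s)
      = FreeMonoid.ofList p * rLtr t * xLtr i * xLtr j * FreeMonoid.ofList s :=
  fm_eq (by simp [xLtr, rLtr])

lemma ofList_cons_r (s : List (Ltr R n)) (r : R) :
    FreeMonoid.ofList (Sum.inr r :: s) = rLtr r * FreeMonoid.ofList s := rfl

lemma ofList_cons_x (s : List (Ltr R n)) (i : Fin n) :
    FreeMonoid.ofList (Sum.inl i :: s) = xLtr i * FreeMonoid.ofList s := rfl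

lemma hm_xr {σ δ : Fin n → R → R} {c d : Fin n → Fin n → R} {a : Fin n → Fin n → Fin n → R}
    {P : W R n → FreeAlg R n} {Pbar : FreeAlg R n →ₗ[ℤ] FreeAlg R n}
    {Q : FreeAlg R n →ₗ[ℤ] FRMon R n}
    (hP : IsReduction σ δ c d a P) (hPbar : ∀ w, Pbar (wd w) = P w)
    (p s : List (Ltr R n)) (i : Fin n) (r : R) (h : MemTL (Sum.inr r :: s)) :
    hmv Pbar Q (p ++ Sum.inl i :: Sum.inr r :: s)
      = hmv Pbar Q (p ++ Sum.inr (σ i r) :: Sum.inl i :: s)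
        + hmv Pbar Q (p ++ Sum.inr (δ i r) :: s) := by
  have hmem : MemT (rLtr r * FreeMonoid.ofList s) := by
    rw [← ofList_cons_r]; exact h
  have hred := hP.xr (FreeMonoid.ofList p) (FreeMonoid.ofList s) i r hmem
  unfold hmv
  rw [ofList_split_xr, ofList_split_rx, ofList_split_r, hPbar, hPbar, hPbar, hred, map_add]

lemma hm_xx {σ δ : Fin n → R → R} {c d : Fin n → Fin n → R} {a : Fin n → Fin n → Fin n → R}
    {P : W R n → FreeAlg R n} {Pbar : FreeAlg R n →ₗ[ℤ] FreeAlg R n}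
    {Q : FreeAlg R n →ₗ[ℤ] FRMon R n}
    (hP : IsReduction σ δ c d a P) (hPbar : ∀ w, Pbar (wd w) = P w)
    (p s : List (Ltr R n)) (i j : Fin n) (hij : i < j) (h : MemTL (Sum.inl i :: s)) :
    hmv Pbar Q (p ++ Sum.inl j :: Sum.inl i :: s)
      = hmv Pbar Q (p ++ Sum.inr (c i j) :: Sum.inl i :: Sum.inl j :: s)
        + (∑ k, hmv Pbar Q (p ++ Sum.inr (a i j k) :: Sum.inl k :: s))
        + hmv Pbar Q (p ++ Sum.inr (d i j) :: s) := by
  have hmem : MemT (xLtr i * FreeMonoid.ofList s) := by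
    rw [← ofList_cons_x]; exact h
  have hred := hP.xx (FreeMonoid.ofList p) (FreeMonoid.ofList s) i j hij hmem
  unfold hmv
  rw [ofList_split_xx, ofList_split_rxx, ofList_split_r]
  simp only [ofList_split_rx]
  simp only [hPbar]
  rw [hred, map_add, map_add, map_sum]

lemma hm_T {σ δ : Fin n → R → R} {c d : Fin n → Fin n → R} {a : Fin n → Fin n → Fin n → R}
    {P : W R n → FreeAlg R n} {Pbar : FreeAlg R n →ₗ[ℤ] FreeAlg R n}
    {Q : FreeAlg R n →ₗ[ℤ] FRMon R n}
    (hP : IsReduction σ δ c d a P) (hPbar : ∀ w, Pbar (wd w) = P w)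
    (hQ : ∀ w, Q (wd w) = qWord w)
    (l : List (Ltr R n)) (h : MemTL l) :
    hmv Pbar Q l = qWord (FreeMonoid.ofList l) := by
  unfold hmv
  rw [hPbar, hP.of_memT _ ((memT_ofList l).2 h), hQ]

open scoped Classical in
lemma qWord_ofList (l : List (Ltr R n)) :
    qWord (FreeMonoid.ofList l)
      = if h : (xlst l).Pairwise (· ≤ ·) then Finsupp.single ⟨xlst l, h⟩ (rlst l) else 0 := rfl

open scoped Classical in
lemma hm_base {σ δ : Fin n → R → R} {c d : Fin n → Fin n → R} {a : Fin n → Fin n → Fin n → R}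
    {P : W R n → FreeAlg R n} {Pbar : FreeAlg R n →ₗ[ℤ] FreeAlg R n}
    {Q : FreeAlg R n →ₗ[ℤ] FRMon R n}
    (hP : IsReduction σ δ c d a P) (hPbar : ∀ w, Pbar (wd w) = P w)
    (hQ : ∀ w, Q (wd w) = qWord w)
    (u₁ u₂ z : List (Ltr R n)) (hz : RZ z) (hT : MemTL (u₁ ++ Sum.inr (0:R) :: u₂)) :
    hmv Pbar Q (u₁ ++ (z ++ u₂))
      = if h : (xlst u₁ ++ xlst u₂).Pairwise (· ≤ ·)
        then Finsupp.single ⟨xlst u₁ ++ xlst u₂, h⟩ (rlst u₁ * (rlst z * rlst u₂)) else 0 := by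
  have hT' : MemTL ((u₁ ++ z) ++ u₂) := memTL_replace hT hz
  rw [show u₁ ++ (z ++ u₂) = (u₁ ++ z) ++ u₂ from (List.append_assoc u₁ z u₂).symm]
  rw [hm_T hP hPbar hQ _ hT', qWord_ofList]
  have hx : xlst ((u₁ ++ z) ++ u₂) = xlst u₁ ++ xlst u₂ := by
    rw [xlst_append, xlst_append, xlst_rz hz, List.append_nil]
  have hr : rlst ((u₁ ++ z) ++ u₂) = rlst u₁ * (rlst z * rlst u₂) := by
    rw [rlst_append, rlst_append, mul_assoc]
  simp only [hx, hr]

end DiamondAuxD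
section DiamondAuxE

open List

variable {R : Type} [Ring R] {n : ℕ}

/-- The five scalar identities, as a predicate on shapes. -/
def PhiP (H : List (Ltr R n) → FRMon R n) (u₁ u₂ : List (Ltr R n)) : Prop :=
  ∀ r s : R,
    H (u₁ ++ Sum.inr (0:R) :: u₂) = 0 ∧
    H (u₁ ++ Sum.inr (-r) :: u₂) = - H (u₁ ++ Sum.inr r :: u₂) ∧
    H (u₁ ++ Sum.inr (r + s) :: u₂) = H (u₁ ++ Sum.inr r :: u₂) + H (u₁ ++ Sum.inr s :: u₂) ∧
    H (u₁ ++ Sum.inr (1:R) :: u₂) = H (u₁ ++ u₂) ∧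
    H (u₁ ++ Sum.inr (r * s) :: u₂) = H (u₁ ++ Sum.inr r :: Sum.inr s :: u₂)

lemma phi_comb {H : List (Ltr R n) → FRMon R n} {u₁ u₂ : List (Ltr R n)}
    {ι : Type} [Fintype ι] {A B : ι → List (Ltr R n)}
    (hAB : ∀ k, PhiP H (A k) (B k))
    (gen : ∀ z : List (Ltr R n), RZ z → H (u₁ ++ (z ++ u₂)) = ∑ k, H (A k ++ (z ++ B k))) :
    PhiP H u₁ u₂ := by
  have E : ∀ t : R, H (u₁ ++ Sum.inr t :: u₂) = ∑ k, H (A k ++ Sum.inr t :: B k) := by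
    intro t
    simpa using gen [Sum.inr t] (rz_single t)
  intro r s
  refine ⟨?_, ?_, ?_, ?_, ?_⟩
  · rw [E 0]
    exact Finset.sum_eq_zero fun k _ => ((hAB k) r s).1
  · rw [E (-r), E r, ← Finset.sum_neg_distrib]
    exact Finset.sum_congr rfl fun k _ => ((hAB k) r s).2.1
  · rw [E (r + s), E r, E s, ← Finset.sum_add_distrib]
    exact Finset.sum_congr rfl fun k _ => ((hAB k) r s).2.2.1
  · have g0 := gen [] rz_nil
    simp only [List.nil_append] at g0
    rw [E 1, g0]
    exact Finset.sum_congr rfl fun k _ => ((hAB k) r s).2.2.2.1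
  · have g2 := gen [Sum.inr r, Sum.inr s] (rz_pair r s)
    simp only [List.cons_append, List.singleton_append, List.nil_append] at g2
    rw [E (r * s), g2]
    exact Finset.sum_congr rfl fun k _ => ((hAB k) r s).2.2.2.2

lemma mainPhi {σ δ : Fin n → R → R} {c d : Fin n → Fin n → R} {a : Fin n → Fin n → Fin n → R}
    {P : W R n → FreeAlg R n} {Pbar : FreeAlg R n →ₗ[ℤ] FreeAlg R n}
    {Q : FreeAlg R n →ₗ[ℤ] FRMon R n}
    (hP : IsReduction σ δ c d a P) (hPbar : ∀ w, Pbar (wd w) = P w)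
    (hQ : ∀ w, Q (wd w) = qWord w) (h1 : Cond1 σ δ) :
    ∀ u₁ u₂ : List (Ltr R n), PhiP (hmv Pbar Q) u₁ u₂ := by
  have key : ∀ N : ℕ × ℕ × ℕ, ∀ u₁ u₂ : List (Ltr R n),
      cplxL (u₁ ++ Sum.inr (0:R) :: u₂) = N → PhiP (hmv Pbar Q) u₁ u₂ := by
    intro N
    refine clt_wf.induction (C := fun N => ∀ u₁ u₂ : List (Ltr R n),
      cplxL (u₁ ++ Sum.inr (0:R) :: u₂) = N → PhiP (hmv Pbar Q) u₁ u₂) N ?_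
    rintro N ih u₁ u₂ rfl
    have IH : ∀ x y : List (Ltr R n),
        CLt (cplxL (x ++ Sum.inr (0:R) :: y)) (cplxL (u₁ ++ Sum.inr (0:R) :: u₂)) →
        PhiP (hmv Pbar Q) x y := fun x y hlt => ih _ hlt x y rfl
    rcases sdecomp u₁ u₂ with hT | ⟨w₁, i, hu, hm0⟩ | ⟨w₁, i, r', w₂, hu, hmm⟩ |
      ⟨w₁, i, j, w₂, hij, hu, hmm⟩ | ⟨w₁, i, r', w₂, hu, hmm⟩ | ⟨w₁, i, j, w₂, hij, hu, hmm⟩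
    · -- base case : the word is in T
      classical
      intro r s
      have E : ∀ t : R, hmv Pbar Q (u₁ ++ Sum.inr t :: u₂)
          = if h : (xlst u₁ ++ xlst u₂).Pairwise (· ≤ ·)
            then Finsupp.single ⟨xlst u₁ ++ xlst u₂, h⟩ (rlst u₁ * (t * rlst u₂)) else 0 := by
        intro t
        simpa using hm_base hP hPbar hQ u₁ u₂ [Sum.inr t] (rz_single t) hT
      have E0 : hmv Pbar Q (u₁ ++ u₂)
          = if h : (xlst u₁ ++ xlst u₂).Pairwise (· ≤ ·)
            then Finsupp.single ⟨xlst u₁ ++ xlst u₂, h⟩ (rlst u₁ * rlst u₂) else 0 := by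
        simpa using hm_base hP hPbar hQ u₁ u₂ [] rz_nil hT
      have E2 : hmv Pbar Q (u₁ ++ Sum.inr r :: Sum.inr s :: u₂)
          = if h : (xlst u₁ ++ xlst u₂).Pairwise (· ≤ ·)
            then Finsupp.single ⟨xlst u₁ ++ xlst u₂, h⟩ (rlst u₁ * (r * (s * rlst u₂))) else 0 := by
        have := hm_base hP hPbar hQ u₁ u₂ [Sum.inr r, Sum.inr s] (rz_pair r s) hT
        simpa [mul_assoc] using this
      by_cases hs : (xlst u₁ ++ xlst u₂).Pairwise (· ≤ ·)
      · refine ⟨?_, ?_, ?_, ?_, ?_⟩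
        · rw [E 0, dif_pos hs, zero_mul, mul_zero]; exact Finsupp.single_zero _
        · rw [E (-r), E r, dif_pos hs, dif_pos hs, neg_mul, mul_neg]
          exact Finsupp.single_neg _ _
        · rw [E (r + s), E r, E s, dif_pos hs, dif_pos hs, dif_pos hs, add_mul, mul_add]
          exact Finsupp.single_add _ _ _
        · rw [E 1, E0, dif_pos hs, dif_pos hs]
          congr 1; simp
        · rw [E (r * s), E2, dif_pos hs, dif_pos hs]
          congr 1; rw [mul_assoc]
      · refine ⟨?_, ?_, ?_, ?_, ?_⟩
        · rw [E 0, dif_neg hs]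
        · rw [E (-r), E r, dif_neg hs, dif_neg hs]; simp
        · rw [E (r + s), E r, E s, dif_neg hs, dif_neg hs, dif_neg hs]; simp
        · rw [E 1, E0, dif_neg hs, dif_neg hs]
        · rw [E (r * s), E2, dif_neg hs, dif_neg hs]
    · -- the hole is the moving r of an x r spot
      subst hu
      obtain ⟨hσ1, hσadd, hσmul, hδadd, hδmul⟩ := h1 i
      have hσ0 : σ i 0 = 0 := by
        have h := hσadd 0 0
        rw [add_zero] at h
        exact (right_eq_add.mp h)
      have hδ0 : δ i 0 = 0 := by
        have h := hδadd 0 0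
        rw [add_zero] at h
        exact (right_eq_add.mp h)
      have hσneg : ∀ t : R, σ i (-t) = - σ i t := by
        intro t
        have h := hσadd t (-t)
        rw [add_neg_cancel, hσ0] at h
        exact (neg_eq_of_add_eq_zero_right h.symm).symm
      have hδneg : ∀ t : R, δ i (-t) = - δ i t := by
        intro t
        have h := hδadd t (-t)
        rw [add_neg_cancel, hδ0] at h
        exact (neg_eq_of_add_eq_zero_right h.symm).symm
      have hδ1 : δ i 1 = 0 := by
        have h := hδmul 1 1
        rw [mul_one, hσ1, one_mul, mul_one] at h
        exact (right_eq_add.mp h)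
      have hmt : ∀ t : R, MemTL (Sum.inr t :: u₂) := by
        intro t
        have h := memTL_replace (A := ([] : List (Ltr R n))) (B := u₂) (t := (0:R)) hm0
          (rz_single t)
        simpa using h
      have hmts : ∀ t t' : R, MemTL (Sum.inr t :: Sum.inr t' :: u₂) := by
        intro t t'
        have h := memTL_replace (A := ([] : List (Ltr R n))) (B := u₂) (t := (0:R)) hm0
          (rz_pair t t')
        simpa using h
      have Ered : ∀ t : R, hmv Pbar Q ((w₁ ++ [Sum.inl i]) ++ Sum.inr t :: u₂)
          = hmv Pbar Q (w₁ ++ Sum.inr (σ i t) :: Sum.inl i :: u₂)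
            + hmv Pbar Q (w₁ ++ Sum.inr (δ i t) :: u₂) := by
        intro t
        rw [show (w₁ ++ [Sum.inl i]) ++ Sum.inr t :: u₂ = w₁ ++ Sum.inl i :: Sum.inr t :: u₂
          by simp]
        exact hm_xr (Q := Q) hP hPbar w₁ u₂ i t (hmt t)
      have ihG : PhiP (hmv Pbar Q) w₁ (Sum.inl i :: u₂) := by
        apply IH
        have h := clt_xr w₁ u₂ i (0:R) (0:R)
        simpa only [List.append_assoc, List.cons_append, List.singleton_append,
          List.nil_append] using h
      have ihD : PhiP (hmv Pbar Q) w₁ u₂ := by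
        apply IH
        have h := clt_drop w₁ u₂ [Sum.inl i, Sum.inr (0:R)] [Sum.inr (0:R)] (by simp)
        simpa only [List.append_assoc, List.cons_append, List.singleton_append,
          List.nil_append] using h
      intro r s
      refine ⟨?_, ?_, ?_, ?_, ?_⟩
      · rw [Ered 0, hσ0, hδ0, ((ihG r s).1 : _), ((ihD r s).1 : _)]
        simp
      · rw [Ered (-r), Ered r, hσneg r, hδneg r, ((ihG (σ i r) s).2.1 : _),
          ((ihD (δ i r) s).2.1 : _)]
        abel
      · rw [Ered (r + s), hσadd r s, hδadd r s, ((ihG (σ i r) (σ i s)).2.2.1 : _),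
          ((ihD (δ i r) (δ i s)).2.2.1 : _), Ered r, Ered s]
        abel
      · rw [Ered 1, hσ1, hδ1, ((ihG r s).2.2.2.1 : _), ((ihD r s).1 : _),
          show (w₁ ++ [Sum.inl i]) ++ u₂ = w₁ ++ Sum.inl i :: u₂ by simp]
        abel
      · rw [Ered (r * s), hσmul r s, hδmul r s, ((ihG (σ i r) (σ i s)).2.2.2.2 : _),
          ((ihD (σ i r * δ i s) (δ i r * s)).2.2.1 : _),
          ((ihD (σ i r) (δ i s)).2.2.2.2 : _), ((ihD (δ i r) s).2.2.2.2 : _),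
          show (w₁ ++ [Sum.inl i]) ++ Sum.inr r :: Sum.inr s :: u₂
            = w₁ ++ Sum.inl i :: Sum.inr r :: Sum.inr s :: u₂ by simp,
          hm_xr (Q := Q) hP hPbar w₁ (Sum.inr s :: u₂) i r (hmts r s),
          show w₁ ++ Sum.inr (σ i r) :: Sum.inl i :: Sum.inr s :: u₂
            = (w₁ ++ [Sum.inr (σ i r)]) ++ Sum.inl i :: Sum.inr s :: u₂ by simp,
          hm_xr (Q := Q) hP hPbar (w₁ ++ [Sum.inr (σ i r)]) u₂ i s (hmt s),
          show (w₁ ++ [Sum.inr (σ i r)]) ++ Sum.inr (σ i s) :: Sum.inl i :: u₂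
            = w₁ ++ Sum.inr (σ i r) :: Sum.inr (σ i s) :: Sum.inl i :: u₂ by simp,
          show (w₁ ++ [Sum.inr (σ i r)]) ++ Sum.inr (δ i s) :: u₂
            = w₁ ++ Sum.inr (σ i r) :: Sum.inr (δ i s) :: u₂ by simp]
        abel
    · -- xr spot inside u₂
      subst hu
      refine phi_comb (ι := Bool)
        (A := fun _ => u₁)
        (B := fun b => cond b (w₁ ++ Sum.inr (σ i r') :: Sum.inl i :: w₂)
          (w₁ ++ Sum.inr (δ i r') :: w₂)) ?_ ?_
      · intro b
        cases b
        · simp only [Bool.cond_false]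
          apply IH
          have h := clt_drop (u₁ ++ Sum.inr (0:R) :: w₁) w₂ [Sum.inl i, Sum.inr r']
            [Sum.inr (δ i r')] (by simp)
          simpa only [List.append_assoc, List.cons_append, List.singleton_append,
            List.nil_append] using h
        · simp only [Bool.cond_true]
          apply IH
          have h := clt_xr (u₁ ++ Sum.inr (0:R) :: w₁) w₂ i r' (σ i r')
          simpa only [List.append_assoc, List.cons_append, List.singleton_append,
            List.nil_append] using h
      · intro z hz
        have h := hm_xr (Q := Q) hP hPbar ((u₁ ++ z) ++ w₁) w₂ i r' hmm
        rw [Fintype.sum_bool]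
        simpa only [Bool.cond_true, Bool.cond_false, List.append_assoc, List.cons_append,
          List.singleton_append, List.nil_append] using h
    · -- xx spot inside u₂
      subst hu
      refine phi_comb (ι := Sum (Fin n) Bool)
        (A := fun _ => u₁)
        (B := Sum.elim (fun k => w₁ ++ Sum.inr (a i j k) :: Sum.inl k :: w₂)
          (fun b => cond b (w₁ ++ Sum.inr (c i j) :: Sum.inl i :: Sum.inl j :: w₂)
            (w₁ ++ Sum.inr (d i j) :: w₂))) ?_ ?_
      · intro k
        rcases k with k | b
        · simp only [Sum.elim_inl]
          apply IH
          have h := clt_drop (u₁ ++ Sum.inr (0:R) :: w₁) w₂ [Sum.inl j, Sum.inl i]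
            [Sum.inr (a i j k), Sum.inl k] (by simp)
          simpa only [List.append_assoc, List.cons_append, List.singleton_append,
            List.nil_append] using h
        · cases b
          · simp only [Sum.elim_inr, Bool.cond_false]
            apply IH
            have h := clt_drop (u₁ ++ Sum.inr (0:R) :: w₁) w₂ [Sum.inl j, Sum.inl i]
              [Sum.inr (d i j)] (by simp)
            simpa only [List.append_assoc, List.cons_append, List.singleton_append,
              List.nil_append] using h
          · simp only [Sum.elim_inr, Bool.cond_true]
            apply IH
            have h := clt_xx (u₁ ++ Sum.inr (0:R) :: w₁) w₂ i j hij (c i j)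
            simpa only [List.append_assoc, List.cons_append, List.singleton_append,
              List.nil_append] using h
      · intro z hz
        have h := hm_xx (Q := Q) hP hPbar ((u₁ ++ z) ++ w₁) w₂ i j hij hmm
        rw [Fintype.sum_sum_type, Fintype.sum_bool]
        simp only [Sum.elim_inl, Sum.elim_inr, Bool.cond_true, Bool.cond_false,
          List.append_assoc, List.cons_append, List.singleton_append, List.nil_append] at h ⊢
        rw [h]
        abel
    · -- xr spot inside u₁
      subst hu
      refine phi_comb (ι := Bool)
        (A := fun b => cond b (w₁ ++ Sum.inr (σ i r') :: Sum.inl i :: w₂)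
          (w₁ ++ Sum.inr (δ i r') :: w₂))
        (B := fun _ => u₂) ?_ ?_
      · intro b
        cases b
        · simp only [Bool.cond_false]
          apply IH
          have h := clt_drop w₁ (w₂ ++ Sum.inr (0:R) :: u₂) [Sum.inl i, Sum.inr r']
            [Sum.inr (δ i r')] (by simp)
          simpa only [List.append_assoc, List.cons_append, List.singleton_append,
            List.nil_append] using h
        · simp only [Bool.cond_true]
          apply IH
          have h := clt_xr w₁ (w₂ ++ Sum.inr (0:R) :: u₂) i r' (σ i r')
          simpa only [List.append_assoc, List.cons_append, List.singleton_append,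
            List.nil_append] using h
      · intro z hz
        have hcond : MemTL (Sum.inr r' :: (w₂ ++ (z ++ u₂))) := by
          have h := memTL_replace (A := Sum.inr r' :: w₂) (B := u₂) (t := (0:R)) hmm hz
          simpa only [List.append_assoc, List.cons_append, List.singleton_append,
            List.nil_append] using h
        have h := hm_xr (Q := Q) hP hPbar w₁ (w₂ ++ (z ++ u₂)) i r' hcond
        rw [Fintype.sum_bool]
        simpa only [Bool.cond_true, Bool.cond_false, List.append_assoc, List.cons_append,
          List.singleton_append, List.nil_append] using h
    · -- xx spot inside u₁
      subst hu
      refine phi_comb (ι := Sum (Fin n) Bool)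
        (A := Sum.elim (fun k => w₁ ++ Sum.inr (a i j k) :: Sum.inl k :: w₂)
          (fun b => cond b (w₁ ++ Sum.inr (c i j) :: Sum.inl i :: Sum.inl j :: w₂)
            (w₁ ++ Sum.inr (d i j) :: w₂)))
        (B := fun _ => u₂) ?_ ?_
      · intro k
        rcases k with k | b
        · simp only [Sum.elim_inl]
          apply IH
          have h := clt_drop w₁ (w₂ ++ Sum.inr (0:R) :: u₂) [Sum.inl j, Sum.inl i]
            [Sum.inr (a i j k), Sum.inl k] (by simp)
          simpa only [List.append_assoc, List.cons_append, List.singleton_append,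
            List.nil_append] using h
        · cases b
          · simp only [Sum.elim_inr, Bool.cond_false]
            apply IH
            have h := clt_drop w₁ (w₂ ++ Sum.inr (0:R) :: u₂) [Sum.inl j, Sum.inl i]
              [Sum.inr (d i j)] (by simp)
            simpa only [List.append_assoc, List.cons_append, List.singleton_append,
              List.nil_append] using h
          · simp only [Sum.elim_inr, Bool.cond_true]
            apply IH
            have h := clt_xx w₁ (w₂ ++ Sum.inr (0:R) :: u₂) i j hij (c i j)
            simpa only [List.append_assoc, List.cons_append, List.singleton_append,
              List.nil_append] using h
      · intro z hz
        have hcond : MemTL (Sum.inl i :: (w₂ ++ (z ++ u₂))) := by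
          have h := memTL_replace (A := Sum.inl i :: w₂) (B := u₂) (t := (0:R)) hmm hz
          simpa only [List.append_assoc, List.cons_append, List.singleton_append,
            List.nil_append] using h
        have h := hm_xx (Q := Q) hP hPbar w₁ (w₂ ++ (z ++ u₂)) i j hij hcond
        rw [Fintype.sum_sum_type, Fintype.sum_bool]
        simp only [Sum.elim_inl, Sum.elim_inr, Bool.cond_true, Bool.cond_false,
          List.append_assoc, List.cons_append, List.singleton_append, List.nil_append] at h ⊢
        rw [h]
        abel
  exact fun u₁ u₂ => key _ u₁ u₂ rfl

end DiamondAuxE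
/-- Under conditions (1)–(3), `h(a0b) = 0`, `h(a(−r)b) = −h(arb)`, `h(a(r+s)b) = h(arb + asb)`,
`h(a1b) = h(ab)` and `h(a(rs)b) = h(arsb)`, for all words `a, b` and all `r, s ∈ R`.
Here `h = q ∘ p̄` where `p̄, q` are the linear extensions of `p` and of `qWord`. -/
theorem h_scalar_identities {R : Type} [Ring R] {n : ℕ}
    (σ δ : Fin n → R → R) (c d : Fin n → Fin n → R) (a : Fin n → Fin n → Fin n → R)
    (hσ : ∀ (i : Fin n) (r : R), r ≠ 0 → σ i r ≠ 0)
    (hc : ∀ i j : Fin n, i < j → ∃ u : R, u * c i j = 1)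
    (P : W R n → FreeAlg R n) (Pbar : FreeAlg R n →ₗ[ℤ] FreeAlg R n)
    (Q : FreeAlg R n →ₗ[ℤ] FRMon R n)
    (hP : IsReduction σ δ c d a P) (hPbar : ∀ w, Pbar (wd w) = P w)
    (hQ : ∀ w, Q (wd w) = qWord w)
    (h1 : Cond1 σ δ)
    (h2 : ∀ i j : Fin n, i < j → ∀ r : R,
      Q (P (xLtr j * xLtr i * rLtr r)) = Q (Pbar (P (xLtr j * xLtr i) * wd (rLtr r))))
    (h3 : ∀ i j k : Fin n, i < j → j < k →
      Q (P (xLtr k * xLtr j * xLtr i)) = Q (Pbar (P (xLtr k * xLtr j) * wd (xLtr i))))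
    (v₁ v₂ : W R n) (r s : R) :
    Q (Pbar (wd (v₁ * rLtr (0 : R) * v₂))) = 0 ∧
    Q (Pbar (wd (v₁ * rLtr (-r) * v₂))) = - Q (Pbar (wd (v₁ * rLtr r * v₂))) ∧
    Q (Pbar (wd (v₁ * rLtr (r + s) * v₂))) =
      Q (Pbar (wd (v₁ * rLtr r * v₂) + wd (v₁ * rLtr s * v₂))) ∧
    Q (Pbar (wd (v₁ * rLtr (1 : R) * v₂))) = Q (Pbar (wd (v₁ * v₂))) ∧
    Q (Pbar (wd (v₁ * rLtr (r * s) * v₂))) = Q (Pbar (wd (v₁ * rLtr r * rLtr s * v₂))) := by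
  have main := mainPhi hP hPbar hQ h1 (FreeMonoid.toList v₁) (FreeMonoid.toList v₂)
  have ew : ∀ t : R, v₁ * rLtr t * v₂
      = FreeMonoid.ofList (FreeMonoid.toList v₁ ++ Sum.inr t :: FreeMonoid.toList v₂) :=
    fun t => fm_eq (by simp [rLtr])
  have ew2 : v₁ * v₂ = FreeMonoid.ofList (FreeMonoid.toList v₁ ++ FreeMonoid.toList v₂) :=
    fm_eq (by simp)
  have ew3 : v₁ * rLtr r * rLtr s * v₂
      = FreeMonoid.ofList
          (FreeMonoid.toList v₁ ++ Sum.inr r :: Sum.inr s :: FreeMonoid.toList v₂) :=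
    fm_eq (by simp [rLtr])
  obtain ⟨h0, hneg, hadd, hone, hmul⟩ := main r s
  refine ⟨?_, ?_, ?_, ?_, ?_⟩
  · rw [ew 0]; exact h0
  · rw [ew (-r), ew r]; exact hneg
  · rw [ew (r + s), map_add, map_add, ew r, ew s]; exact hadd
  · rw [ew 1, ew2]; exact hone
  · rw [ew (r * s), ew3]; exact hmul
end

section
/- Let R, I = {1,…,n}, X, σᵢ, δᵢ, c_{ij}, d_{ij}, a_{ij}^{(k)}, p, q, h, t be as in the reduction machinery, and assume conditions (1)–(3) hold: each σᵢ is a ring endomorphism of R, each δᵢ is a σᵢ-derivation, h(x_j xᵢ r) = h(p(x_j xᵢ) r) for i < j and r ∈ R, and h(x_k x_j xᵢ) = h(p(x_k x_j) xᵢ) for i < j < k. Then for all y, z ∈ ℤ⟨X ∪ R⟩ and all a ∈ ℤT, h(y a z) = h(y t(q(a)) z). -/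
variable {R : Type} [Ring R] {n : ℕ}

/-! ### Auxiliary development for the proof -/

set_option linter.unusedSectionVars false
set_option linter.unnecessarySeqFocus false
set_option maxHeartbeats 1000000

variable {R : Type} [Ring R] {n : ℕ}

namespace HQ

/-- count of x-letters smaller than j -/
def cLT (j : Fin n) (l : List (Ltr R n)) : ℕ :=
  l.countP (fun x => match x with | Sum.inl i => decide (i < j) | _ => false)

def cGT (j : Fin n) (l : List (Ltr R n)) : ℕ :=
  l.countP (fun x => match x with | Sum.inl i => decide (j < i) | _ => false)

def cntR (l : List (Ltr R n)) : ℕ :=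
  l.countP (fun x => match x with | Sum.inr _ => true | _ => false)

def cntX (l : List (Ltr R n)) : ℕ :=
  l.countP (fun x => match x with | Sum.inl _ => true | _ => false)

def crX (A B : List (Ltr R n)) : ℕ :=
  (A.map (fun x => match x with | Sum.inl j => cLT j B | Sum.inr _ => 0)).sum

@[simp] lemma cLT_nil (j : Fin n) : cLT j ([] : List (Ltr R n)) = 0 := rfl
@[simp] lemma cLT_cons_inl (j i : Fin n) (l : List (Ltr R n)) :
    cLT j (Sum.inl i :: l) = (if i < j then 1 else 0) + cLT j l := by
  simp only [cLT, List.countP_cons]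
  by_cases h : i < j <;> simp [h] <;> omega
@[simp] lemma cLT_cons_inr (j : Fin n) (r : R) (l : List (Ltr R n)) :
    cLT j (Sum.inr r :: l) = cLT j l := by
  simp [cLT, List.countP_cons]
@[simp] lemma cLT_append (j : Fin n) (A B : List (Ltr R n)) :
    cLT j (A ++ B) = cLT j A + cLT j B := List.countP_append

@[simp] lemma cGT_nil (j : Fin n) : cGT j ([] : List (Ltr R n)) = 0 := rfl
@[simp] lemma cGT_cons_inl (j i : Fin n) (l : List (Ltr R n)) :
    cGT j (Sum.inl i :: l) = (if j < i then 1 else 0) + cGT j l := by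
  simp only [cGT, List.countP_cons]
  by_cases h : j < i <;> simp [h] <;> omega
@[simp] lemma cGT_cons_inr (j : Fin n) (r : R) (l : List (Ltr R n)) :
    cGT j (Sum.inr r :: l) = cGT j l := by
  simp [cGT, List.countP_cons]
@[simp] lemma cGT_append (j : Fin n) (A B : List (Ltr R n)) :
    cGT j (A ++ B) = cGT j A + cGT j B := List.countP_append

@[simp] lemma cntR_nil : cntR ([] : List (Ltr R n)) = 0 := rfl
@[simp] lemma cntR_cons_inl (i : Fin n) (l : List (Ltr R n)) :
    cntR (Sum.inl i :: l) = cntR l := by simp [cntR, List.countP_cons]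
@[simp] lemma cntR_cons_inr (r : R) (l : List (Ltr R n)) :
    cntR (Sum.inr r :: l) = cntR l + 1 := by simp [cntR, List.countP_cons]
@[simp] lemma cntR_append (A B : List (Ltr R n)) :
    cntR (A ++ B) = cntR A + cntR B := List.countP_append

@[simp] lemma cntX_nil : cntX ([] : List (Ltr R n)) = 0 := rfl
@[simp] lemma cntX_cons_inl (i : Fin n) (l : List (Ltr R n)) :
    cntX (Sum.inl i :: l) = cntX l + 1 := by simp [cntX, List.countP_cons]
@[simp] lemma cntX_cons_inr (r : R) (l : List (Ltr R n)) :
    cntX (Sum.inr r :: l) = cntX l := by simp [cntX, List.countP_cons]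
@[simp] lemma cntX_append (A B : List (Ltr R n)) :
    cntX (A ++ B) = cntX A + cntX B := List.countP_append

@[simp] lemma invX_nil : invX ([] : List (Ltr R n)) = 0 := rfl
@[simp] lemma invX_cons_inl (j : Fin n) (l : List (Ltr R n)) :
    invX (Sum.inl j :: l) = cLT j l + invX l := rfl
@[simp] lemma invX_cons_inr (r : R) (l : List (Ltr R n)) :
    invX (Sum.inr r :: l) = invX l := rfl

@[simp] lemma invXR_nil : invXR ([] : List (Ltr R n)) = 0 := rfl
@[simp] lemma invXR_cons_inl (j : Fin n) (l : List (Ltr R n)) :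
    invXR (Sum.inl j :: l) = cntR l + invXR l := rfl
@[simp] lemma invXR_cons_inr (r : R) (l : List (Ltr R n)) :
    invXR (Sum.inr r :: l) = invXR l := rfl

@[simp] lemma crX_nil (B : List (Ltr R n)) : crX [] B = 0 := rfl
@[simp] lemma crX_cons_inl (j : Fin n) (A B : List (Ltr R n)) :
    crX (Sum.inl j :: A) B = cLT j B + crX A B := rfl
@[simp] lemma crX_cons_inr (r : R) (A B : List (Ltr R n)) :
    crX (Sum.inr r :: A) B = crX A B := by simp [crX]
@[simp] lemma crX_append_left (A A' B : List (Ltr R n)) :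
    crX (A ++ A') B = crX A B + crX A' B := by
  simp [crX, List.map_append, List.sum_append]

@[simp] lemma crX_nil_right (A : List (Ltr R n)) : crX A [] = 0 := by
  induction A with
  | nil => rfl
  | cons x A ih => cases x <;> simp [ih]

@[simp] lemma crX_cons_inl_right (i : Fin n) (A B : List (Ltr R n)) :
    crX A (Sum.inl i :: B) = cGT i A + crX A B := by
  induction A with
  | nil => rfl
  | cons x A ih =>
    cases x with
    | inl j => simp [ih]; ring
    | inr r => simp [ih]

@[simp] lemma crX_cons_inr_right (r : R) (A B : List (Ltr R n)) :
    crX A (Sum.inr r :: B) = crX A B := by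
  induction A with
  | nil => rfl
  | cons x A ih => cases x <;> simp [ih]

@[simp] lemma crX_append_right (A B C : List (Ltr R n)) :
    crX A (B ++ C) = crX A B + crX A C := by
  induction A with
  | nil => rfl
  | cons x A ih => cases x <;> simp [ih] <;> omega

@[simp] lemma invX_append (A B : List (Ltr R n)) :
    invX (A ++ B) = invX A + invX B + crX A B := by
  induction A with
  | nil => simp
  | cons x A ih => cases x <;> simp [ih] <;> omega

@[simp] lemma invXR_append (A B : List (Ltr R n)) :
    invXR (A ++ B) = invXR A + invXR B + cntX A * cntR B := by
  induction A with
  | nil => simp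
  | cons x A ih => cases x <;> simp [ih] <;> ring

end HQ
namespace HQ

abbrev L (R : Type) (n : ℕ) := List (Ltr R n)

variable {R : Type} [Ring R] {n : ℕ}

def ofl (l : L R n) : W R n := FreeMonoid.ofList l

def ListT (l : L R n) : Prop := invX l = 0 ∧ invXR l = 0

lemma memT_ofl {l : L R n} (h : ListT l) : MemT (ofl l) := h

lemma listT_cons_inr {r : R} {l : L R n} : ListT (Sum.inr r :: l) ↔ ListT l := by
  simp [ListT]

lemma noX_invX {A : L R n} (h : cntX A = 0) : invX A = 0 := by
  induction A with
  | nil => rfl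
  | cons x A ih =>
    cases x with
    | inl i => simp at h
    | inr r => simp at h ⊢; exact ih h

lemma noX_invXR {A : L R n} (h : cntX A = 0) : invXR A = 0 := by
  induction A with
  | nil => rfl
  | cons x A ih =>
    cases x with
    | inl i => simp at h
    | inr r => simp at h ⊢; exact ih h

lemma noX_crX {A : L R n} (h : cntX A = 0) : ∀ B : L R n, crX A B = 0 := by
  induction A with
  | nil => intro B; rfl
  | cons x A ih =>
    cases x with
    | inl i => simp at h
    | inr r => simp at h ⊢; exact ih h

lemma noX_cLT {A : L R n} (h : cntX A = 0) : ∀ j : Fin n, cLT j A = 0 := by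
  induction A with
  | nil => intro j; rfl
  | cons x A ih =>
    cases x with
    | inl i => simp at h
    | inr r => simp at h ⊢; exact ih h

lemma cLT_mono {i j : Fin n} (h : i ≤ j) (l : L R n) : cLT i l ≤ cLT j l := by
  induction l with
  | nil => simp
  | cons x l ih =>
    cases x with
    | inl k =>
      simp only [cLT_cons_inl]
      have : (if k < i then (1:ℕ) else 0) ≤ if k < j then 1 else 0 := by
        by_cases hk : k < i
        · simp [hk, lt_of_lt_of_le hk h]
        · simp [hk]
      omega
    | inr r => simpa using ih

lemma listT_of_parts {A B : L R n} (hA : cntX A = 0) (hB : ListT B) : ListT (A ++ B) := by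
  refine ⟨?_, ?_⟩ <;>
    simp [noX_invX hA, noX_invXR hA, noX_crX hA, hA, hB.1, hB.2]

lemma decomp (l : L R n) : ListT l ∨
    (∃ (m : L R n) (j : Fin n) (r : R) (rest' : L R n),
      l = m ++ Sum.inl j :: Sum.inr r :: rest' ∧ ListT (Sum.inr r :: rest')) ∨
    (∃ (m : L R n) (j i : Fin n) (rest' : L R n),
      l = m ++ Sum.inl j :: Sum.inl i :: rest' ∧ i < j ∧ ListT (Sum.inl i :: rest')) := by
  induction l with
  | nil => exact Or.inl ⟨rfl, rfl⟩
  | cons x l ih =>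
    rcases ih with hT | ⟨m, j, r, rest', rfl, h2⟩ | ⟨m, j, i, rest', rfl, h2, h3⟩
    · cases x with
      | inr r => exact Or.inl (listT_cons_inr.mpr hT)
      | inl j =>
        cases l with
        | nil => exact Or.inl (by simp [ListT])
        | cons y l' =>
          cases y with
          | inr r => exact Or.inr (Or.inl ⟨[], j, r, l', rfl, hT⟩)
          | inl i =>
            by_cases hij : i < j
            · exact Or.inr (Or.inr ⟨[], j, i, l', rfl, hij, hT⟩)
            · left
              have hji : j ≤ i := le_of_not_gt hij
              have hm := cLT_mono hji l'
              simp [ListT, hij] at hT ⊢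
              omega
    · exact Or.inr (Or.inl ⟨x :: m, j, r, rest', rfl, h2⟩)
    · exact Or.inr (Or.inr ⟨x :: m, j, i, rest', rfl, h2, h3⟩)

lemma xsplit (l : L R n) : cntX l = 0 ∨
    ∃ (u : L R n) (i : Fin n) (ρ : L R n), l = u ++ Sum.inl i :: ρ ∧ cntX ρ = 0 := by
  induction l with
  | nil => left; rfl
  | cons x l ih =>
    rcases ih with h | ⟨u, i, ρ, rfl, hρ⟩
    · cases x with
      | inl i => exact Or.inr ⟨[], i, l, rfl, h⟩
      | inr r => left; simpa
    · exact Or.inr ⟨x :: u, i, ρ, rfl, hρ⟩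

def xP (l : L R n) : List (Fin n) :=
  l.filterMap (fun x => match x with | Sum.inl i => some i | _ => none)

def rP (l : L R n) : R :=
  (l.filterMap (fun x => match x with | Sum.inr r => some r | _ => none)).prod

@[simp] lemma xP_nil : xP ([] : L R n) = [] := rfl
@[simp] lemma xP_cons_inl (i : Fin n) (l : L R n) : xP (Sum.inl i :: l) = i :: xP l := rfl
@[simp] lemma xP_cons_inr (r : R) (l : L R n) : xP (Sum.inr r :: l) = xP l := rfl
@[simp] lemma xP_append (A B : L R n) : xP (A ++ B) = xP A ++ xP B :=
  List.filterMap_append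

@[simp] lemma rP_nil : rP ([] : L R n) = 1 := rfl
@[simp] lemma rP_cons_inl (i : Fin n) (l : L R n) : rP (Sum.inl i :: l) = rP l := rfl
@[simp] lemma rP_cons_inr (r : R) (l : L R n) : rP (Sum.inr r :: l) = r * rP l := rfl
@[simp] lemma rP_append (A B : L R n) : rP (A ++ B) = rP A * rP B := by
  simp [rP, List.filterMap_append]

lemma noX_xP {A : L R n} (h : cntX A = 0) : xP A = [] := by
  induction A with
  | nil => rfl
  | cons x A ih =>
    cases x with
    | inl i => simp at h
    | inr r => simp at h ⊢; exact ih h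

lemma noR_rP {A : L R n} (h : cntR A = 0) : rP A = 1 := by
  induction A with
  | nil => rfl
  | cons x A ih =>
    cases x with
    | inl i => simp at h ⊢; exact ih h
    | inr r => simp at h

lemma noR_map_xP {A : L R n} (h : cntR A = 0) : (xP A).map Sum.inl = A := by
  induction A with
  | nil => rfl
  | cons x A ih =>
    cases x with
    | inl i => simp at h ⊢; exact ih h
    | inr r => simp at h

lemma sorted_xP {l : L R n} (h : ListT l) : (xP l).Pairwise (· ≤ ·) := by
  induction l with
  | nil => simp
  | cons x l ih =>
    cases x with
    | inr r => exact ih (listT_cons_inr.mp h)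
    | inl i =>
      simp only [ListT, invX_cons_inl, invXR_cons_inl, Nat.add_eq_zero] at h
      refine List.pairwise_cons.mpr ⟨?_, ih ⟨h.1.2, h.2.2⟩⟩
      intro b hb
      obtain ⟨y, hy, hyb⟩ := List.mem_filterMap.mp hb
      have h0 := List.countP_eq_zero.mp h.1.1 y hy
      cases y with
      | inl k =>
        simp only [Option.some.injEq] at hyb; subst hyb
        simp at h0
        exact h0
      | inr r => simp at hyb

lemma qWord_ofl {l : L R n} (hs : (xP l).Pairwise (· ≤ ·)) :
    qWord (ofl l) = (Finsupp.single ⟨xP l, hs⟩ (rP l) : FRMon R n) := by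
  rw [qWord]
  exact dif_pos hs

end HQ
namespace HQ

structure Ctx (R : Type) [Ring R] (n : ℕ) where
  σ : Fin n → R → R
  δ : Fin n → R → R
  c : Fin n → Fin n → R
  d : Fin n → Fin n → R
  a : Fin n → Fin n → Fin n → R
  P : W R n → FreeAlg R n
  Q : FreeAlg R n →ₗ[ℤ] FRMon R n
  hP : IsReduction σ δ c d a P
  hQ : ∀ w, Q (wd w) = qWord w
  h1 : Cond1 σ δ

variable {R : Type} [Ring R] {n : ℕ}

noncomputable def Ctx.QP (C : Ctx R n) (l : L R n) : FRMon R n := C.Q (C.P (ofl l))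

lemma Ctx.σ_one (C : Ctx R n) (i : Fin n) : C.σ i 1 = 1 := (C.h1 i).1
lemma Ctx.σ_add (C : Ctx R n) (i : Fin n) (r s : R) : C.σ i (r + s) = C.σ i r + C.σ i s :=
  (C.h1 i).2.1 r s
lemma Ctx.σ_mul (C : Ctx R n) (i : Fin n) (r s : R) : C.σ i (r * s) = C.σ i r * C.σ i s :=
  (C.h1 i).2.2.1 r s
lemma Ctx.δ_add (C : Ctx R n) (i : Fin n) (r s : R) : C.δ i (r + s) = C.δ i r + C.δ i s :=
  (C.h1 i).2.2.2.1 r s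
lemma Ctx.δ_mul (C : Ctx R n) (i : Fin n) (r s : R) :
    C.δ i (r * s) = C.σ i r * C.δ i s + C.δ i r * s := (C.h1 i).2.2.2.2 r s

lemma Ctx.δ_one (C : Ctx R n) (i : Fin n) : C.δ i 1 = 0 := by
  have := C.δ_mul i 1 1
  rw [C.σ_one, one_mul, mul_one, one_mul] at this
  -- this : δ i 1 = δ i 1 + δ i 1
  have h2 : C.δ i 1 + C.δ i 1 = 0 + C.δ i 1 := by rw [zero_add]; exact this.symm
  simpa using (add_right_cancel h2)

lemma Ctx.QP_T (C : Ctx R n) {l : L R n} (h : ListT l) : C.QP l = qWord (ofl l) := by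
  rw [Ctx.QP, C.hP.of_memT _ (memT_ofl h), C.hQ]

lemma ofl_eq_mul (l₁ l₂ : L R n) : ofl (l₁ ++ l₂) = ofl l₁ * ofl l₂ := rfl
lemma ofl_cons_x (i : Fin n) (l : L R n) : ofl (Sum.inl i :: l) = xLtr i * ofl l := rfl
lemma ofl_cons_r (r : R) (l : L R n) : ofl (Sum.inr r :: l) = rLtr r * ofl l := rfl

lemma Ctx.xr' (C : Ctx R n) (l₁ l₂ : L R n) (i : Fin n) (r : R)
    (h : ListT (Sum.inr r :: l₂)) :
    C.QP (l₁ ++ Sum.inl i :: Sum.inr r :: l₂) =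
      C.QP (l₁ ++ Sum.inr (C.σ i r) :: Sum.inl i :: l₂) +
      C.QP (l₁ ++ Sum.inr (C.δ i r) :: l₂) := by
  have h' : MemT (rLtr r * ofl l₂) := memT_ofl h
  have key := C.hP.xr (ofl l₁) (ofl l₂) i r h'
  have e1 : ofl l₁ * xLtr i * rLtr r * ofl l₂ = ofl (l₁ ++ Sum.inl i :: Sum.inr r :: l₂) := by
    simp [ofl_eq_mul, ofl_cons_x, ofl_cons_r, mul_assoc]
  have e2 : ofl l₁ * rLtr (C.σ i r) * xLtr i * ofl l₂ =
      ofl (l₁ ++ Sum.inr (C.σ i r) :: Sum.inl i :: l₂) := by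
    simp [ofl_eq_mul, ofl_cons_x, ofl_cons_r, mul_assoc]
  have e3 : ofl l₁ * rLtr (C.δ i r) * ofl l₂ = ofl (l₁ ++ Sum.inr (C.δ i r) :: l₂) := by
    simp [ofl_eq_mul, ofl_cons_x, ofl_cons_r, mul_assoc]
  rw [e1, e2, e3] at key
  simp [Ctx.QP, key]

lemma Ctx.xx' (C : Ctx R n) (l₁ l₂ : L R n) (i j : Fin n) (hij : i < j)
    (h : ListT (Sum.inl i :: l₂)) :
    C.QP (l₁ ++ Sum.inl j :: Sum.inl i :: l₂) =
      C.QP (l₁ ++ Sum.inr (C.c i j) :: Sum.inl i :: Sum.inl j :: l₂) +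
      (∑ k, C.QP (l₁ ++ Sum.inr (C.a i j k) :: Sum.inl k :: l₂)) +
      C.QP (l₁ ++ Sum.inr (C.d i j) :: l₂) := by
  have h' : MemT (xLtr i * ofl l₂) := memT_ofl h
  have key := C.hP.xx (ofl l₁) (ofl l₂) i j hij h'
  have e1 : ofl l₁ * xLtr j * xLtr i * ofl l₂ = ofl (l₁ ++ Sum.inl j :: Sum.inl i :: l₂) := by
    simp [ofl_eq_mul, ofl_cons_x, ofl_cons_r, mul_assoc]
  have e2 : ofl l₁ * rLtr (C.c i j) * xLtr i * xLtr j * ofl l₂ =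
      ofl (l₁ ++ Sum.inr (C.c i j) :: Sum.inl i :: Sum.inl j :: l₂) := by
    simp [ofl_eq_mul, ofl_cons_x, ofl_cons_r, mul_assoc]
  have e3 : ∀ k, ofl l₁ * rLtr (C.a i j k) * xLtr k * ofl l₂ =
      ofl (l₁ ++ Sum.inr (C.a i j k) :: Sum.inl k :: l₂) := by
    intro k; simp [ofl_eq_mul, ofl_cons_x, ofl_cons_r, mul_assoc]
  have e4 : ofl l₁ * rLtr (C.d i j) * ofl l₂ = ofl (l₁ ++ Sum.inr (C.d i j) :: l₂) := by
    simp [ofl_eq_mul, ofl_cons_x, ofl_cons_r, mul_assoc]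
  rw [e1, e2, e4] at key
  simp only [e3] at key
  simp [Ctx.QP, key, map_sum]

/-- Evaluation in the base case: prefix with no `x`'s, suffix in `T`. -/
lemma Ctx.base_eval (C : Ctx R n) {l₁ l₂ : L R n} (hX : cntX l₁ = 0) (hT : ListT l₂) (r : R) :
    C.QP (l₁ ++ Sum.inr r :: l₂) =
      (Finsupp.single ⟨xP l₂, sorted_xP hT⟩ (rP l₁ * (r * rP l₂)) : FRMon R n) := by
  have hTw : ListT (l₁ ++ Sum.inr r :: l₂) := listT_of_parts hX (listT_cons_inr.mpr hT)
  rw [C.QP_T hTw, qWord_ofl (sorted_xP hTw)]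
  have hx : xP (l₁ ++ Sum.inr r :: l₂) = xP l₂ := by simp [noX_xP hX]
  have hr : rP (l₁ ++ Sum.inr r :: l₂) = rP l₁ * (r * rP l₂) := by simp
  congr 1
  exact Subtype.ext hx

end HQ
namespace HQ

variable {R : Type} [Ring R] {n : ℕ}

def lex3 : (ℕ×ℕ×ℕ) → (ℕ×ℕ×ℕ) → Prop :=
  Prod.Lex (· < ·) (Prod.Lex (· < ·) (· < ·))

lemma lex3_wf : WellFounded (lex3 ) :=
  WellFounded.prod_lex (Nat.lt_wfRel.wf) (WellFounded.prod_lex Nat.lt_wfRel.wf Nat.lt_wfRel.wf)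

lemma lex3_ind {motive : ℕ×ℕ×ℕ → Prop}
    (h : ∀ t, (∀ t', lex3 t' t → motive t') → motive t) : ∀ t, motive t :=
  fun t => lex3_wf.induction t h

lemma lex3_of {a b c a' b' c' : ℕ}
    (h : a' < a ∨ (a' = a ∧ (b' < b ∨ (b' = b ∧ c' < c)))) : lex3 (a',b',c') (a,b,c) := by
  rcases h with h | ⟨rfl, h | ⟨rfl, h⟩⟩
  · exact Prod.Lex.left _ _ h
  · exact Prod.Lex.right _ (Prod.Lex.left _ _ h)
  · exact Prod.Lex.right _ (Prod.Lex.right _ h)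

def μ1 (l₁ l₂ : L R n) : ℕ×ℕ×ℕ :=
  (cntX (l₁ ++ l₂), invX (l₁ ++ l₂), invXR (l₁ ++ Sum.inr (1:R) :: l₂))

lemma Ctx.L_add_aux (C : Ctx R n) : ∀ (t : ℕ×ℕ×ℕ), ∀ l₁ l₂ : L R n, μ1 l₁ l₂ = t →
    ∀ a b : R,
      C.QP (l₁ ++ Sum.inr a :: l₂) + C.QP (l₁ ++ Sum.inr b :: l₂) =
        C.QP (l₁ ++ Sum.inr (a + b) :: l₂) := by
  intro t
  induction t using lex3_ind with
  | h t IH =>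
  rintro l₁ l₂ hμ a b
  subst hμ
  rcases decomp l₂ with hT2 | ⟨m, j, r, rest', rfl, hrest⟩ | ⟨m, j, i, rest', rfl, hij, hrest⟩
  · -- l₂ ∈ T : pivot (if any) lies in l₁
    rcases xsplit l₁ with hX1 | ⟨u, i, ρ, rfl, hρ⟩
    · -- base case : the whole word is in T
      rw [C.base_eval hX1 hT2 a, C.base_eval hX1 hT2 b, C.base_eval hX1 hT2 (a+b)]
      exact (Finsupp.single_add _ _ _).symm.trans (congrArg _ (by rw [add_mul, mul_add]))
    · rcases ρ with _ | ⟨x, ρ'⟩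
      · -- l₁ = u ++ [inl i] : the pivot acts on the distinguished letter
        have pre : ∀ r : R, ListT (Sum.inr r :: l₂) := fun r => listT_cons_inr.mpr hT2
        have Ea := C.xr' u l₂ i a (pre a)
        have Eb := C.xr' u l₂ i b (pre b)
        have Eab := C.xr' u l₂ i (a+b) (pre (a+b))
        have key₁ : lex3 (μ1 u (Sum.inl i :: l₂)) (μ1 (u ++ [Sum.inl i]) l₂) := by
          simp only [μ1]; apply lex3_of; simp; all_goals omega
        have key₂ : lex3 (μ1 u l₂) (μ1 (u ++ [Sum.inl i]) l₂) := by
          simp only [μ1]; apply lex3_of; simp; all_goals omega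
        have IH₁ := IH _ key₁ u (Sum.inl i :: l₂) rfl (C.σ i a) (C.σ i b)
        have IH₂ := IH _ key₂ u l₂ rfl (C.δ i a) (C.δ i b)
        simp only [List.append_assoc, List.cons_append, List.nil_append] at Ea Eb Eab ⊢
        rw [Ea, Eb, Eab, C.σ_add, C.δ_add, ← IH₁, ← IH₂]
        abel
      · -- l₁ = u ++ inl i :: x :: ρ' with x an r-letter
        cases x with
        | inl k => simp at hρ
        | inr r' =>
          simp only [cntX_cons_inr] at hρ
          have pre : ∀ s : R, ListT (Sum.inr r' :: (ρ' ++ Sum.inr s :: l₂)) := fun s =>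
            listT_cons_inr.mpr (listT_of_parts hρ (listT_cons_inr.mpr hT2))
          have Ea := C.xr' u (ρ' ++ Sum.inr a :: l₂) i r' (pre a)
          have Eb := C.xr' u (ρ' ++ Sum.inr b :: l₂) i r' (pre b)
          have Eab := C.xr' u (ρ' ++ Sum.inr (a+b) :: l₂) i r' (pre (a+b))
          have key₁ : lex3 (μ1 (u ++ Sum.inr (C.σ i r') :: Sum.inl i :: ρ') l₂)
              (μ1 (u ++ Sum.inl i :: Sum.inr r' :: ρ') l₂) := by
            simp only [μ1]; apply lex3_of; simp; all_goals omega
          have key₂ : lex3 (μ1 (u ++ Sum.inr (C.δ i r') :: ρ') l₂)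
              (μ1 (u ++ Sum.inl i :: Sum.inr r' :: ρ') l₂) := by
            simp only [μ1]; apply lex3_of; simp; all_goals omega
          have IH₁ := IH _ key₁ (u ++ Sum.inr (C.σ i r') :: Sum.inl i :: ρ') l₂ rfl a b
          have IH₂ := IH _ key₂ (u ++ Sum.inr (C.δ i r') :: ρ') l₂ rfl a b
          simp only [List.append_assoc, List.cons_append, List.nil_append] at Ea Eb Eab IH₁ IH₂ ⊢
          rw [Ea, Eb, Eab, ← IH₁, ← IH₂]
          abel
  · -- pivot inside l₂, (x_j, r)-type
    have Ea := C.xr' (l₁ ++ Sum.inr a :: m) rest' j r hrest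
    have Eb := C.xr' (l₁ ++ Sum.inr b :: m) rest' j r hrest
    have Eab := C.xr' (l₁ ++ Sum.inr (a+b) :: m) rest' j r hrest
    have key₁ : lex3 (μ1 l₁ (m ++ Sum.inr (C.σ j r) :: Sum.inl j :: rest'))
        (μ1 l₁ (m ++ Sum.inl j :: Sum.inr r :: rest')) := by
      simp only [μ1]; apply lex3_of; simp; all_goals omega
    have key₂ : lex3 (μ1 l₁ (m ++ Sum.inr (C.δ j r) :: rest'))
        (μ1 l₁ (m ++ Sum.inl j :: Sum.inr r :: rest')) := by
      simp only [μ1]; apply lex3_of; simp; all_goals omega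
    have IH₁ := IH _ key₁ l₁ (m ++ Sum.inr (C.σ j r) :: Sum.inl j :: rest') rfl a b
    have IH₂ := IH _ key₂ l₁ (m ++ Sum.inr (C.δ j r) :: rest') rfl a b
    simp only [List.append_assoc, List.cons_append, List.nil_append] at Ea Eb Eab IH₁ IH₂ ⊢
    rw [Ea, Eb, Eab, ← IH₁, ← IH₂]
    abel
  · -- pivot inside l₂, (x_j, x_i)-type
    have Ea := C.xx' (l₁ ++ Sum.inr a :: m) rest' i j hij hrest
    have Eb := C.xx' (l₁ ++ Sum.inr b :: m) rest' i j hij hrest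
    have Eab := C.xx' (l₁ ++ Sum.inr (a+b) :: m) rest' i j hij hrest
    have key₁ : lex3 (μ1 l₁ (m ++ Sum.inr (C.c i j) :: Sum.inl i :: Sum.inl j :: rest'))
        (μ1 l₁ (m ++ Sum.inl j :: Sum.inl i :: rest')) := by
      simp only [μ1]; apply lex3_of; simp [hij, hij.not_gt]; all_goals omega
    have key₂ : ∀ k : Fin n, lex3 (μ1 l₁ (m ++ Sum.inr (C.a i j k) :: Sum.inl k :: rest'))
        (μ1 l₁ (m ++ Sum.inl j :: Sum.inl i :: rest')) := by
      intro k; simp only [μ1]; apply lex3_of; simp; all_goals omega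
    have key₃ : lex3 (μ1 l₁ (m ++ Sum.inr (C.d i j) :: rest'))
        (μ1 l₁ (m ++ Sum.inl j :: Sum.inl i :: rest')) := by
      simp only [μ1]; apply lex3_of; simp; all_goals omega
    have IH₁ := IH _ key₁ l₁ (m ++ Sum.inr (C.c i j) :: Sum.inl i :: Sum.inl j :: rest') rfl a b
    have IH₂ := fun k => IH _ (key₂ k) l₁ (m ++ Sum.inr (C.a i j k) :: Sum.inl k :: rest') rfl a b
    have IH₃ := IH _ key₃ l₁ (m ++ Sum.inr (C.d i j) :: rest') rfl a b
    simp only [List.append_assoc, List.cons_append, List.nil_append] at Ea Eb Eab IH₁ IH₃ ⊢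
    simp -failIfUnchanged only [List.append_assoc, List.cons_append, List.nil_append] at IH₂
    rw [Ea, Eb, Eab, ← IH₁, ← IH₃]
    simp only [← IH₂]
    rw [Finset.sum_add_distrib]
    abel

lemma Ctx.L_add (C : Ctx R n) (l₁ l₂ : L R n) (a b : R) :
    C.QP (l₁ ++ Sum.inr a :: l₂) + C.QP (l₁ ++ Sum.inr b :: l₂) =
      C.QP (l₁ ++ Sum.inr (a + b) :: l₂) :=
  C.L_add_aux _ l₁ l₂ rfl a b

lemma Ctx.L_zero (C : Ctx R n) (l₁ l₂ : L R n) :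
    C.QP (l₁ ++ Sum.inr (0:R) :: l₂) = 0 := by
  have h := C.L_add l₁ l₂ 0 0
  rw [add_zero] at h
  have h2 : C.QP (l₁ ++ Sum.inr (0:R) :: l₂) + C.QP (l₁ ++ Sum.inr (0:R) :: l₂) =
      0 + C.QP (l₁ ++ Sum.inr (0:R) :: l₂) := by rw [zero_add]; exact h
  exact add_right_cancel h2

end HQ
namespace HQ

variable {R : Type} [Ring R] {n : ℕ}

lemma Ctx.base_eval' (C : Ctx R n) {l₁ l₂ : L R n} (hX : cntX l₁ = 0) (hT : ListT l₂) :
    C.QP (l₁ ++ l₂) = (Finsupp.single ⟨xP l₂, sorted_xP hT⟩ (rP l₁ * rP l₂) : FRMon R n) := by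
  have hTw : ListT (l₁ ++ l₂) := listT_of_parts hX hT
  rw [C.QP_T hTw, qWord_ofl (sorted_xP hTw)]
  have hx : xP (l₁ ++ l₂) = xP l₂ := by simp [noX_xP hX]
  have hr : rP (l₁ ++ l₂) = rP l₁ * rP l₂ := by simp
  congr 1
  exact Subtype.ext hx

lemma Ctx.L_one_aux (C : Ctx R n) : ∀ (t : ℕ×ℕ×ℕ), ∀ l₁ l₂ : L R n, μ1 l₁ l₂ = t →
    C.QP (l₁ ++ Sum.inr (1:R) :: l₂) = C.QP (l₁ ++ l₂) := by
  intro t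
  induction t using lex3_ind with
  | h t IH =>
  rintro l₁ l₂ hμ
  subst hμ
  rcases decomp l₂ with hT2 | ⟨m, j, r, rest', rfl, hrest⟩ | ⟨m, j, i, rest', rfl, hij, hrest⟩
  · rcases xsplit l₁ with hX1 | ⟨u, i, ρ, rfl, hρ⟩
    · rw [C.base_eval hX1 hT2 1, C.base_eval' hX1 hT2, one_mul]
    · rcases ρ with _ | ⟨x, ρ'⟩
      · have E1 := C.xr' u l₂ i 1 (listT_cons_inr.mpr hT2)
        have key₁ : lex3 (μ1 u (Sum.inl i :: l₂)) (μ1 (u ++ [Sum.inl i]) l₂) := by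
          simp only [μ1]; apply lex3_of; simp; all_goals omega
        have IH₁ := IH _ key₁ u (Sum.inl i :: l₂) rfl
        simp only [List.append_assoc, List.cons_append, List.nil_append] at E1 IH₁ ⊢
        rw [E1, C.σ_one, C.δ_one, C.L_zero u l₂, add_zero, IH₁]
      · cases x with
        | inl k => simp at hρ
        | inr r' =>
          simp only [cntX_cons_inr] at hρ
          have pre1 : ListT (Sum.inr r' :: (ρ' ++ Sum.inr (1:R) :: l₂)) :=
            listT_cons_inr.mpr (listT_of_parts hρ (listT_cons_inr.mpr hT2))
          have pre2 : ListT (Sum.inr r' :: (ρ' ++ l₂)) :=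
            listT_cons_inr.mpr (listT_of_parts hρ hT2)
          have E1 := C.xr' u (ρ' ++ Sum.inr (1:R) :: l₂) i r' pre1
          have E2 := C.xr' u (ρ' ++ l₂) i r' pre2
          have key₁ : lex3 (μ1 (u ++ Sum.inr (C.σ i r') :: Sum.inl i :: ρ') l₂)
              (μ1 (u ++ Sum.inl i :: Sum.inr r' :: ρ') l₂) := by
            simp only [μ1]; apply lex3_of; simp; all_goals omega
          have key₂ : lex3 (μ1 (u ++ Sum.inr (C.δ i r') :: ρ') l₂)
              (μ1 (u ++ Sum.inl i :: Sum.inr r' :: ρ') l₂) := by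
            simp only [μ1]; apply lex3_of; simp; all_goals omega
          have IH₁ := IH _ key₁ (u ++ Sum.inr (C.σ i r') :: Sum.inl i :: ρ') l₂ rfl
          have IH₂ := IH _ key₂ (u ++ Sum.inr (C.δ i r') :: ρ') l₂ rfl
          simp only [List.append_assoc, List.cons_append, List.nil_append] at E1 E2 IH₁ IH₂ ⊢
          rw [E1, E2, IH₁, IH₂]
  · have E1 := C.xr' (l₁ ++ Sum.inr (1:R) :: m) rest' j r hrest
    have E2 := C.xr' (l₁ ++ m) rest' j r hrest
    have key₁ : lex3 (μ1 l₁ (m ++ Sum.inr (C.σ j r) :: Sum.inl j :: rest'))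
        (μ1 l₁ (m ++ Sum.inl j :: Sum.inr r :: rest')) := by
      simp only [μ1]; apply lex3_of; simp; all_goals omega
    have key₂ : lex3 (μ1 l₁ (m ++ Sum.inr (C.δ j r) :: rest'))
        (μ1 l₁ (m ++ Sum.inl j :: Sum.inr r :: rest')) := by
      simp only [μ1]; apply lex3_of; simp; all_goals omega
    have IH₁ := IH _ key₁ l₁ (m ++ Sum.inr (C.σ j r) :: Sum.inl j :: rest') rfl
    have IH₂ := IH _ key₂ l₁ (m ++ Sum.inr (C.δ j r) :: rest') rfl
    simp only [List.append_assoc, List.cons_append, List.nil_append] at E1 E2 IH₁ IH₂ ⊢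
    rw [E1, E2, IH₁, IH₂]
  · have E1 := C.xx' (l₁ ++ Sum.inr (1:R) :: m) rest' i j hij hrest
    have E2 := C.xx' (l₁ ++ m) rest' i j hij hrest
    have key₁ : lex3 (μ1 l₁ (m ++ Sum.inr (C.c i j) :: Sum.inl i :: Sum.inl j :: rest'))
        (μ1 l₁ (m ++ Sum.inl j :: Sum.inl i :: rest')) := by
      simp only [μ1]; apply lex3_of; simp [hij, hij.not_gt]; all_goals omega
    have key₂ : ∀ k : Fin n, lex3 (μ1 l₁ (m ++ Sum.inr (C.a i j k) :: Sum.inl k :: rest'))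
        (μ1 l₁ (m ++ Sum.inl j :: Sum.inl i :: rest')) := by
      intro k; simp only [μ1]; apply lex3_of; simp; all_goals omega
    have key₃ : lex3 (μ1 l₁ (m ++ Sum.inr (C.d i j) :: rest'))
        (μ1 l₁ (m ++ Sum.inl j :: Sum.inl i :: rest')) := by
      simp only [μ1]; apply lex3_of; simp; all_goals omega
    have IH₁ := IH _ key₁ l₁ (m ++ Sum.inr (C.c i j) :: Sum.inl i :: Sum.inl j :: rest') rfl
    have IH₂ := fun k => IH _ (key₂ k) l₁ (m ++ Sum.inr (C.a i j k) :: Sum.inl k :: rest') rfl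
    have IH₃ := IH _ key₃ l₁ (m ++ Sum.inr (C.d i j) :: rest') rfl
    simp only [List.append_assoc, List.cons_append, List.nil_append] at E1 E2 IH₁ IH₃ ⊢
    simp -failIfUnchanged only [List.append_assoc, List.cons_append, List.nil_append] at IH₂
    rw [E1, E2, IH₁, IH₃]
    simp only [IH₂]

lemma Ctx.L_one (C : Ctx R n) (l₁ l₂ : L R n) :
    C.QP (l₁ ++ Sum.inr (1:R) :: l₂) = C.QP (l₁ ++ l₂) :=
  C.L_one_aux _ l₁ l₂ rfl

def μ2 (l₁ l₂ : L R n) : ℕ×ℕ×ℕ :=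
  (cntX (l₁ ++ l₂), invX (l₁ ++ l₂), invXR (l₁ ++ Sum.inr (1:R) :: Sum.inr (1:R) :: l₂))

lemma Ctx.L_mul_aux (C : Ctx R n) : ∀ (t : ℕ×ℕ×ℕ), ∀ l₁ l₂ : L R n, μ2 l₁ l₂ = t →
    ∀ r s : R,
      C.QP (l₁ ++ Sum.inr r :: Sum.inr s :: l₂) = C.QP (l₁ ++ Sum.inr (r * s) :: l₂) := by
  intro t
  induction t using lex3_ind with
  | h t IH =>
  rintro l₁ l₂ hμ r s
  subst hμ
  rcases decomp l₂ with hT2 | ⟨m, j, r', rest', rfl, hrest⟩ | ⟨m, j, i, rest', rfl, hij, hrest⟩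
  · rcases xsplit l₁ with hX1 | ⟨u, i, ρ, rfl, hρ⟩
    · have hX1' : cntX (l₁ ++ [Sum.inr r]) = 0 := by simp [hX1]
      rw [show l₁ ++ Sum.inr r :: Sum.inr s :: l₂ = (l₁ ++ [Sum.inr r]) ++ Sum.inr s :: l₂ by
        simp]
      rw [C.base_eval hX1' hT2 s, C.base_eval hX1 hT2 (r*s)]
      congr 1
      simp [mul_assoc]
    · rcases ρ with _ | ⟨x, ρ'⟩
      · -- the pivot x_i acts on the pair (r, s)
        have pre1 : ListT (Sum.inr r :: Sum.inr s :: l₂) :=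
          listT_cons_inr.mpr (listT_cons_inr.mpr hT2)
        have E1 := C.xr' u (Sum.inr s :: l₂) i r pre1
        have E2 := C.xr' (u ++ [Sum.inr (C.σ i r)]) l₂ i s (listT_cons_inr.mpr hT2)
        have E3 := C.xr' u l₂ i (r * s) (listT_cons_inr.mpr hT2)
        have key₁ : lex3 (μ2 u (Sum.inl i :: l₂)) (μ2 (u ++ [Sum.inl i]) l₂) := by
          simp only [μ2]; apply lex3_of; simp; all_goals omega
        have key₂ : lex3 (μ2 u l₂) (μ2 (u ++ [Sum.inl i]) l₂) := by
          simp only [μ2]; apply lex3_of; simp; all_goals omega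
        have IH₁ := IH _ key₁ u (Sum.inl i :: l₂) rfl (C.σ i r) (C.σ i s)
        have IH₂ := IH _ key₂ u l₂ rfl (C.σ i r) (C.δ i s)
        have IH₃ := IH _ key₂ u l₂ rfl (C.δ i r) s
        have Ladd := C.L_add u l₂ (C.σ i r * C.δ i s) (C.δ i r * s)
        simp only [List.append_assoc, List.cons_append, List.nil_append] at E1 E2 E3 IH₁ IH₂ IH₃ Ladd ⊢
        rw [E1, E2, E3, IH₁, IH₂, IH₃, add_assoc, Ladd, ← C.σ_mul, ← C.δ_mul]
      · cases x with
        | inl k => simp at hρ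
        | inr r'' =>
          simp only [cntX_cons_inr] at hρ
          have pre1 : ListT (Sum.inr r'' :: (ρ' ++ Sum.inr r :: Sum.inr s :: l₂)) :=
            listT_cons_inr.mpr (listT_of_parts hρ
              (listT_cons_inr.mpr (listT_cons_inr.mpr hT2)))
          have pre2 : ListT (Sum.inr r'' :: (ρ' ++ Sum.inr (r*s) :: l₂)) :=
            listT_cons_inr.mpr (listT_of_parts hρ (listT_cons_inr.mpr hT2))
          have E1 := C.xr' u (ρ' ++ Sum.inr r :: Sum.inr s :: l₂) i r'' pre1
          have E2 := C.xr' u (ρ' ++ Sum.inr (r*s) :: l₂) i r'' pre2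
          have key₁ : lex3 (μ2 (u ++ Sum.inr (C.σ i r'') :: Sum.inl i :: ρ') l₂)
              (μ2 (u ++ Sum.inl i :: Sum.inr r'' :: ρ') l₂) := by
            simp only [μ2]; apply lex3_of; simp; all_goals omega
          have key₂ : lex3 (μ2 (u ++ Sum.inr (C.δ i r'') :: ρ') l₂)
              (μ2 (u ++ Sum.inl i :: Sum.inr r'' :: ρ') l₂) := by
            simp only [μ2]; apply lex3_of; simp; all_goals omega
          have IH₁ := IH _ key₁ (u ++ Sum.inr (C.σ i r'') :: Sum.inl i :: ρ') l₂ rfl r s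
          have IH₂ := IH _ key₂ (u ++ Sum.inr (C.δ i r'') :: ρ') l₂ rfl r s
          simp only [List.append_assoc, List.cons_append, List.nil_append] at E1 E2 IH₁ IH₂ ⊢
          rw [E1, E2, IH₁, IH₂]
  · have E1 := C.xr' (l₁ ++ Sum.inr r :: Sum.inr s :: m) rest' j r' hrest
    have E2 := C.xr' (l₁ ++ Sum.inr (r*s) :: m) rest' j r' hrest
    have key₁ : lex3 (μ2 l₁ (m ++ Sum.inr (C.σ j r') :: Sum.inl j :: rest'))
        (μ2 l₁ (m ++ Sum.inl j :: Sum.inr r' :: rest')) := by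
      simp only [μ2]; apply lex3_of; simp; all_goals omega
    have key₂ : lex3 (μ2 l₁ (m ++ Sum.inr (C.δ j r') :: rest'))
        (μ2 l₁ (m ++ Sum.inl j :: Sum.inr r' :: rest')) := by
      simp only [μ2]; apply lex3_of; simp; all_goals omega
    have IH₁ := IH _ key₁ l₁ (m ++ Sum.inr (C.σ j r') :: Sum.inl j :: rest') rfl r s
    have IH₂ := IH _ key₂ l₁ (m ++ Sum.inr (C.δ j r') :: rest') rfl r s
    simp only [List.append_assoc, List.cons_append, List.nil_append] at E1 E2 IH₁ IH₂ ⊢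
    rw [E1, E2, IH₁, IH₂]
  · have E1 := C.xx' (l₁ ++ Sum.inr r :: Sum.inr s :: m) rest' i j hij hrest
    have E2 := C.xx' (l₁ ++ Sum.inr (r*s) :: m) rest' i j hij hrest
    have key₁ : lex3 (μ2 l₁ (m ++ Sum.inr (C.c i j) :: Sum.inl i :: Sum.inl j :: rest'))
        (μ2 l₁ (m ++ Sum.inl j :: Sum.inl i :: rest')) := by
      simp only [μ2]; apply lex3_of; simp [hij, hij.not_gt]; all_goals omega
    have key₂ : ∀ k : Fin n, lex3 (μ2 l₁ (m ++ Sum.inr (C.a i j k) :: Sum.inl k :: rest'))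
        (μ2 l₁ (m ++ Sum.inl j :: Sum.inl i :: rest')) := by
      intro k; simp only [μ2]; apply lex3_of; simp; all_goals omega
    have key₃ : lex3 (μ2 l₁ (m ++ Sum.inr (C.d i j) :: rest'))
        (μ2 l₁ (m ++ Sum.inl j :: Sum.inl i :: rest')) := by
      simp only [μ2]; apply lex3_of; simp; all_goals omega
    have IH₁ := IH _ key₁ l₁ (m ++ Sum.inr (C.c i j) :: Sum.inl i :: Sum.inl j :: rest') rfl r s
    have IH₂ := fun k => IH _ (key₂ k) l₁ (m ++ Sum.inr (C.a i j k) :: Sum.inl k :: rest') rfl r s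
    have IH₃ := IH _ key₃ l₁ (m ++ Sum.inr (C.d i j) :: rest') rfl r s
    simp only [List.append_assoc, List.cons_append, List.nil_append] at E1 E2 IH₁ IH₃ ⊢
    simp -failIfUnchanged only [List.append_assoc, List.cons_append, List.nil_append] at IH₂
    rw [E1, E2, IH₁, IH₃]
    simp only [IH₂]

lemma Ctx.L_mul (C : Ctx R n) (l₁ l₂ : L R n) (r s : R) :
    C.QP (l₁ ++ Sum.inr r :: Sum.inr s :: l₂) = C.QP (l₁ ++ Sum.inr (r * s) :: l₂) :=
  C.L_mul_aux _ l₁ l₂ rfl r s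

/-- The normal-form lemma: inside `QP`, a word of `T` may be replaced by its reduced
normal form (product of `R`-letters, followed by the sorted `x`-letters). -/
lemma Ctx.L_norm (C : Ctx R n) : ∀ (l : L R n), ListT l → ∀ l₁ l₂ : L R n,
    C.QP (l₁ ++ l ++ l₂) = C.QP (l₁ ++ Sum.inr (rP l) :: ((xP l).map Sum.inl ++ l₂)) := by
  intro l
  induction l with
  | nil => intro _ l₁ l₂; simpa using (C.L_one l₁ l₂).symm
  | cons x l ih =>
    intro hT l₁ l₂
    cases x with
    | inr r =>
      have hT' : ListT l := listT_cons_inr.mp hT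
      have step := ih hT' (l₁ ++ [Sum.inr r]) l₂
      simp only [List.append_assoc, List.cons_append, List.nil_append] at step ⊢
      rw [step]
      have := C.L_mul l₁ ((xP l).map Sum.inl ++ l₂) r (rP l)
      simp -failIfUnchanged only [List.append_assoc, List.cons_append, List.nil_append] at this
      rw [this]
      simp
    | inl i =>
      -- no r-letters at all in (inl i :: l)
      have hR : cntR (Sum.inl i :: l) = 0 := by
        have := hT.2
        simp only [invXR_cons_inl, Nat.add_eq_zero] at this
        simp [this.1]
      have h1 : rP (Sum.inl i :: l) = 1 := noR_rP hR
      have h2 : (xP (Sum.inl i :: l)).map Sum.inl = Sum.inl i :: l := noR_map_xP hR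
      rw [h1, h2]
      have := C.L_one l₁ ((Sum.inl i :: l) ++ l₂)
      simp only [List.append_assoc, List.cons_append, List.nil_append] at this ⊢
      rw [this]

end HQ
namespace HQ

variable {R : Type} [Ring R] {n : ℕ}

lemma wd_mul (w₁ w₂ : W R n) : wd (w₁ * w₂) = wd w₁ * wd w₂ :=
  map_mul (MonoidAlgebra.of ℤ (W R n)) w₁ w₂

end HQ

open HQ in
theorem h_q_modulo' {R : Type} [Ring R] {n : ℕ}
    (σ δ : Fin n → R → R) (c d : Fin n → Fin n → R) (a : Fin n → Fin n → Fin n → R)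
    (P : W R n → FreeAlg R n) (Pbar : FreeAlg R n →ₗ[ℤ] FreeAlg R n)
    (Q : FreeAlg R n →ₗ[ℤ] FRMon R n)
    (hP : IsReduction σ δ c d a P) (hPbar : ∀ w, Pbar (wd w) = P w)
    (hQ : ∀ w, Q (wd w) = qWord w)
    (h1 : Cond1 σ δ)
    (y z : FreeAlg R n) (u : FreeAlg R n)
    (hu : u ∈ Submodule.span ℤ (wd '' {w : W R n | MemT w})) :
    Q (Pbar (y * u * z)) = Q (Pbar (y * tmap (Q u) * z)) := by
  classical
  set C : HQ.Ctx R n := ⟨σ, δ, c, d, a, P, Q, hP, hQ, h1⟩ with hC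
  have key : ∀ w₁ w₂ : W R n, ∀ u : FreeAlg R n,
      u ∈ Submodule.span ℤ (wd '' {w : W R n | MemT w}) →
      Q (Pbar (wd w₁ * u * wd w₂)) = Q (Pbar (wd w₁ * tmap (Q u) * wd w₂)) := by
    intro w₁ w₂
    have QPw : ∀ l : L R n,
        Q (Pbar (wd w₁ * wd (HQ.ofl l) * wd w₂)) =
          C.QP (FreeMonoid.toList w₁ ++ l ++ FreeMonoid.toList w₂) := by
      intro l
      rw [← wd_mul, ← wd_mul, hPbar]
      rfl
    -- the additive endomorphism `f ↦ h(y t(f) z)` of `F_R(Mon)`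
    have Fadd : ∀ (m : Mon n) (r s : R),
        Q (Pbar (wd w₁ * wd (HQ.ofl (Sum.inr (r + s) :: m.val.map Sum.inl)) * wd w₂)) =
          Q (Pbar (wd w₁ * wd (HQ.ofl (Sum.inr r :: m.val.map Sum.inl)) * wd w₂)) +
          Q (Pbar (wd w₁ * wd (HQ.ofl (Sum.inr s :: m.val.map Sum.inl)) * wd w₂)) := by
      intro m r s
      rw [QPw, QPw, QPw]
      have := (C.L_add (FreeMonoid.toList w₁) (m.val.map Sum.inl ++ FreeMonoid.toList w₂)
        r s).symm
      simp only [List.append_assoc, List.cons_append, List.nil_append] at this ⊢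
      exact this
    set F : Mon n → (R →+ FRMon R n) := fun m => AddMonoidHom.mk'
      (fun r => Q (Pbar (wd w₁ * wd (HQ.ofl (Sum.inr r :: m.val.map Sum.inl)) * wd w₂)))
      (fun r s => Fadd m r s) with hF
    set Θ : FRMon R n →+ FRMon R n := Finsupp.liftAddHom F with hΘ
    have ΘEq : ∀ f : FRMon R n, Q (Pbar (wd w₁ * tmap f * wd w₂)) = Θ f := by
      intro f
      rw [hΘ, Finsupp.liftAddHom_apply, tmap, Finsupp.sum, Finsupp.sum,
        Finset.mul_sum, Finset.sum_mul, map_sum, map_sum]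
      exact Finset.sum_congr rfl (fun m _ => rfl)
    intro u hu
    induction hu using Submodule.span_induction with
    | mem x hx =>
      obtain ⟨w, hw, rfl⟩ := hx
      have hlw : ListT (FreeMonoid.toList w) := hw
      have hs := sorted_xP hlw
      have e0 : wd w = wd (HQ.ofl (FreeMonoid.toList w)) := rfl
      rw [e0, QPw, C.L_norm _ hlw]
      have eq : Q (wd (HQ.ofl (FreeMonoid.toList w))) =
          (Finsupp.single ⟨xP (FreeMonoid.toList w), hs⟩ (rP (FreeMonoid.toList w)) : FRMon R n) := by
        rw [hQ]; exact qWord_ofl hs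
      rw [eq, ΘEq, hΘ]
      refine Eq.trans ?_ (Finsupp.liftAddHom_apply_single F _ _).symm
      rw [hF]
      have := (QPw (Sum.inr (rP (FreeMonoid.toList w)) ::
        (xP (FreeMonoid.toList w)).map Sum.inl)).symm
      simp only [List.append_assoc, List.cons_append, List.nil_append] at this ⊢
      exact this
    | zero => simp [tmap]
    | add u v hu hv ihu ihv =>
      rw [mul_add, add_mul, map_add, map_add, ihu, ihv]
      simp only [ΘEq]
      rw [map_add Q, map_add Θ]
    | smul t u hu ihu =>
      rw [mul_smul_comm, smul_mul_assoc, map_smul, map_smul, ihu]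
      simp only [ΘEq]
      rw [map_smul Q, AddMonoidHom.map_zsmul]
  induction y using MonoidAlgebra.induction_on with
  | of w₁ =>
    induction z using MonoidAlgebra.induction_on with
    | of w₂ => exact key w₁ w₂ u hu
    | add z₁ z₂ ih₁ ih₂ => simp only [mul_add, map_add, ih₁, ih₂]
    | smul t z ih => simp only [mul_smul_comm, map_smul, ih]
  | add y₁ y₂ ih₁ ih₂ => simp only [add_mul, map_add, ih₁, ih₂]
  | smul t y ih => simp only [smul_mul_assoc, map_smul, ih]


/-- Under conditions (1)–(3), for all `y, z ∈ ℤ⟨X ∪ R⟩` and all `a ∈ ℤT`,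
`h(y a z) = h(y t(q(a)) z)`, where `h = q ∘ p̄`. -/
theorem h_q_modulo {R : Type} [Ring R] {n : ℕ}
    (σ δ : Fin n → R → R) (c d : Fin n → Fin n → R) (a : Fin n → Fin n → Fin n → R)
    (hσ : ∀ (i : Fin n) (r : R), r ≠ 0 → σ i r ≠ 0)
    (hc : ∀ i j : Fin n, i < j → ∃ u : R, u * c i j = 1)
    (P : W R n → FreeAlg R n) (Pbar : FreeAlg R n →ₗ[ℤ] FreeAlg R n)
    (Q : FreeAlg R n →ₗ[ℤ] FRMon R n)
    (hP : IsReduction σ δ c d a P) (hPbar : ∀ w, Pbar (wd w) = P w)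
    (hQ : ∀ w, Q (wd w) = qWord w)
    (h1 : Cond1 σ δ)
    (h2 : ∀ i j : Fin n, i < j → ∀ r : R,
      Q (P (xLtr j * xLtr i * rLtr r)) = Q (Pbar (P (xLtr j * xLtr i) * wd (rLtr r))))
    (h3 : ∀ i j k : Fin n, i < j → j < k →
      Q (P (xLtr k * xLtr j * xLtr i)) = Q (Pbar (P (xLtr k * xLtr j) * wd (xLtr i))))
    (y z : FreeAlg R n) (u : FreeAlg R n)
    (hu : u ∈ Submodule.span ℤ (wd '' {w : W R n | MemT w})) :
    Q (Pbar (y * u * z)) = Q (Pbar (y * tmap (Q u) * z)) :=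
  h_q_modulo' σ δ c d a P Pbar Q hP hPbar hQ h1 y z u hu
end
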